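/- arXiv:1406.1704 — 7 statements merged into one kernel-verified Lean document; each statement's English description precedes it below -/
import Mathlib

section
/- Let g and h be arithmetic functions with g(n) ≪ 4^n n^s and h(n) ≪ 4^n n^s for some real s. Then the proper Dirichlet convolution (g *' h)(n) := Σ_{d | n, 1 < d < n} g(d) h(n/d) satisfies (g *' h)(n) ≪ 3^n as n → ∞. -/
/-- If `g(n) ≪ 4^n n^s` and `h(n) ≪ 4^n n^s`, then their proper Dirichlet
convolution `(g *' h)(n) = ∑_{d ∣ n, 1 < d < n} g(d) h(n/d)` satisfies
`(g *' h)(n) ≪ 3^n`. -/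
theorem stmt5 (g h : ℕ → ℝ) (s : ℝ)
    (hg : ∃ C : ℝ, ∀ n : ℕ, 1 ≤ n → |g n| ≤ C * 4 ^ n * (n : ℝ) ^ s)
    (hh : ∃ C : ℝ, ∀ n : ℕ, 1 ≤ n → |h n| ≤ C * 4 ^ n * (n : ℝ) ^ s) :
    ∃ C : ℝ, ∀ n : ℕ, 1 ≤ n →
      |∑ d ∈ n.properDivisors.filter (1 < ·), g d * h (n / d)| ≤ C * 3 ^ n := by
  obtain ⟨c1, hc1⟩ := hg
  obtain ⟨c2, hc2⟩ := hh
  set C1 := max c1 0 with hC1def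
  set C2 := max c2 0 with hC2def
  have hC1 : (0:ℝ) ≤ C1 := le_max_right _ _
  have hC2 : (0:ℝ) ≤ C2 := le_max_right _ _
  have hg' : ∀ n : ℕ, 1 ≤ n → |g n| ≤ C1 * 4 ^ n * (n : ℝ) ^ s := by
    intro n hn
    refine (hc1 n hn).trans ?_
    have h0 : (0:ℝ) ≤ 4 ^ n * (n:ℝ) ^ s := by positivity
    have := le_max_left c1 0
    nlinarith
  have hh' : ∀ n : ℕ, 1 ≤ n → |h n| ≤ C2 * 4 ^ n * (n : ℝ) ^ s := by
    intro n hn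
    refine (hc2 n hn).trans ?_
    have h0 : (0:ℝ) ≤ 4 ^ n * (n:ℝ) ^ s := by positivity
    have := le_max_left c2 0
    nlinarith
  set k := ⌈s⌉₊ + 1 with hk
  obtain ⟨M, hM⟩ : ∃ M : ℝ, ∀ n : ℕ, (n:ℝ) ^ k * (2/3:ℝ) ^ n ≤ M := by
    have hsum : Summable (fun n : ℕ => (n:ℝ) ^ k * (2/3:ℝ) ^ n) :=
      Summable.of_norm (summable_norm_pow_mul_geometric_of_norm_lt_one k
        (by rw [Real.norm_eq_abs, abs_of_pos] <;> norm_num))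
    have ht := hsum.tendsto_atTop_zero
    obtain ⟨M, hM⟩ := ht.bddAbove_range
    exact ⟨M, fun n => hM ⟨n, rfl⟩⟩
  have hM0 : (0:ℝ) ≤ M := by
    have := hM 0
    simpa [hk] using this
  refine ⟨C1 * C2 * 16 * M, fun n hn => ?_⟩
  -- bound each term
  have hterm : ∀ d ∈ n.properDivisors.filter (1 < ·),
      |g d * h (n / d)| ≤ C1 * C2 * 16 * 2 ^ n * (n:ℝ) ^ s := by
    intro d hd
    simp only [Finset.mem_filter, Nat.mem_properDivisors] at hd
    obtain ⟨⟨hdvd, hdn⟩, hd1⟩ := hd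
    set m := n / d with hm
    have hdm : d * m = n := Nat.mul_div_cancel' hdvd
    have hd2 : 2 ≤ d := hd1
    have hm2 : 2 ≤ m := by
      rcases Nat.lt_or_ge m 2 with h | h
      · interval_cases m <;> omega
      · exact h
    have hm1 : 1 ≤ m := le_trans (by norm_num) hm2
    have hb : |g d * h m| ≤ (C1 * 4 ^ d * (d:ℝ) ^ s) * (C2 * 4 ^ m * (m:ℝ) ^ s) := by
      rw [abs_mul]
      apply mul_le_mul (hg' d (by omega)) (hh' m hm1) (abs_nonneg _)
      positivity
    refine hb.trans ?_
    have hrpow : (d:ℝ) ^ s * (m:ℝ) ^ s = (n:ℝ) ^ s := by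
      rw [← Real.mul_rpow (by positivity) (by positivity)]
      norm_cast
      rw [hdm]
    have hexp : 2 * (d + m) ≤ n + 4 := by nlinarith
    have hpow : (4:ℝ) ^ d * 4 ^ m ≤ 16 * 2 ^ n := by
      have : (4:ℝ) ^ d * 4 ^ m = 2 ^ (2 * (d + m)) := by
        rw [← pow_add, pow_mul]; norm_num
      rw [this]
      calc (2:ℝ) ^ (2 * (d + m)) ≤ 2 ^ (n + 4) :=
            pow_le_pow_right₀ (by norm_num) hexp
        _ = 16 * 2 ^ n := by ring
    have hns : (0:ℝ) ≤ (n:ℝ) ^ s := by positivity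
    calc C1 * 4 ^ d * (d:ℝ) ^ s * (C2 * 4 ^ m * (m:ℝ) ^ s)
        = C1 * C2 * (4 ^ d * 4 ^ m) * ((d:ℝ) ^ s * (m:ℝ) ^ s) := by ring
      _ = C1 * C2 * (4 ^ d * 4 ^ m) * (n:ℝ) ^ s := by rw [hrpow]
      _ ≤ C1 * C2 * (16 * 2 ^ n) * (n:ℝ) ^ s := by
          apply mul_le_mul_of_nonneg_right _ hns
          apply mul_le_mul_of_nonneg_left hpow (by positivity)
      _ = C1 * C2 * 16 * 2 ^ n * (n:ℝ) ^ s := by ring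
  have hcard : (n.properDivisors.filter (1 < ·)).card ≤ n := by
    calc (n.properDivisors.filter (1 < ·)).card
        ≤ n.properDivisors.card := Finset.card_filter_le _ _
      _ ≤ (Finset.range n).card := Finset.card_le_card (fun d hd => by
          simp only [Nat.mem_properDivisors] at hd
          simpa using hd.2)
      _ = n := Finset.card_range n
  have hsum : |∑ d ∈ n.properDivisors.filter (1 < ·), g d * h (n / d)|
      ≤ (n:ℝ) * (C1 * C2 * 16 * 2 ^ n * (n:ℝ) ^ s) := by
    calc |∑ d ∈ n.properDivisors.filter (1 < ·), g d * h (n / d)|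
        ≤ ∑ d ∈ n.properDivisors.filter (1 < ·), |g d * h (n / d)| :=
          Finset.abs_sum_le_sum_abs _ _
      _ ≤ ∑ _d ∈ n.properDivisors.filter (1 < ·),
            (C1 * C2 * 16 * 2 ^ n * (n:ℝ) ^ s) := Finset.sum_le_sum hterm
      _ = ((n.properDivisors.filter (1 < ·)).card : ℝ)
            * (C1 * C2 * 16 * 2 ^ n * (n:ℝ) ^ s) := by
          rw [Finset.sum_const, nsmul_eq_mul]
      _ ≤ (n:ℝ) * (C1 * C2 * 16 * 2 ^ n * (n:ℝ) ^ s) := by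
          apply mul_le_mul_of_nonneg_right _ (by positivity)
          exact_mod_cast hcard
  refine hsum.trans ?_
  -- now: n * (C1*C2*16*2^n*n^s) ≤ C1*C2*16*M*3^n
  have key : (n:ℝ) * (n:ℝ) ^ s * 2 ^ n ≤ M * 3 ^ n := by
    have h1 : (1:ℝ) ≤ (n:ℝ) := by exact_mod_cast hn
    have hns : (n:ℝ) ^ s ≤ (n:ℝ) ^ (⌈s⌉₊ : ℕ) := by
      rw [← Real.rpow_natCast (n:ℝ) ⌈s⌉₊]
      exact Real.rpow_le_rpow_of_exponent_le h1 (Nat.le_ceil s)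
    have h2 : (n:ℝ) * (n:ℝ) ^ s ≤ (n:ℝ) ^ k := by
      calc (n:ℝ) * (n:ℝ) ^ s ≤ (n:ℝ) * (n:ℝ) ^ (⌈s⌉₊ : ℕ) :=
            mul_le_mul_of_nonneg_left hns (by positivity)
        _ = (n:ℝ) ^ k := by rw [hk, pow_succ]; ring
    calc (n:ℝ) * (n:ℝ) ^ s * 2 ^ n ≤ (n:ℝ) ^ k * 2 ^ n := by
          apply mul_le_mul_of_nonneg_right h2 (by positivity)
      _ = ((n:ℝ) ^ k * (2/3:ℝ) ^ n) * 3 ^ n := by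
          rw [mul_assoc, ← mul_pow]; norm_num
      _ ≤ M * 3 ^ n := mul_le_mul_of_nonneg_right (hM n) (by positivity)
  calc (n:ℝ) * (C1 * C2 * 16 * 2 ^ n * (n:ℝ) ^ s)
      = C1 * C2 * 16 * ((n:ℝ) * (n:ℝ) ^ s * 2 ^ n) := by ring
    _ ≤ C1 * C2 * 16 * (M * 3 ^ n) :=
        mul_le_mul_of_nonneg_left key (by positivity)
    _ = C1 * C2 * 16 * M * 3 ^ n := by ring
end

section
/- The generating function F(z) = Σ_{n≥1} f(n) z^n of the number of arithmetic formulas satisfies the functional equation F(z)^2 - F(z) + F̃(z) = 0 in the region |z| < R, where R is the radius of convergence of F and F̃(z) := z + Σ_{d≥2} f(d)(F(z^d) - z^d). -/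
/-- Arithmetic formulas built from the constant 1, addition and multiplication. -/
inductive Formula : Type
  | one : Formula
  | add : Formula → Formula → Formula
  | mul : Formula → Formula → Formula

/-- The value of an arithmetic formula. -/
def Formula.val : Formula → ℕ
  | .one => 1
  | .add a b => a.val + b.val
  | .mul a b => a.val * b.val

/-- Validity: multiplication by 1 is not allowed. -/
def Formula.Valid : Formula → Prop
  | .one => True
  | .add a b => a.Valid ∧ b.Valid
  | .mul a b => a.Valid ∧ b.Valid ∧ 2 ≤ a.val ∧ 2 ≤ b.val

/-- `f n` is the number of arithmetic formulas for `n`. -/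
noncomputable def f (n : ℕ) : ℕ := {A : Formula | A.Valid ∧ A.val = n}.ncard

/-- The generating function `F(z) = ∑_{n ≥ 1} f(n) z^n`. -/
noncomputable def F (z : ℂ) : ℂ := ∑' n : ℕ, (f n : ℂ) * z ^ n

/-- `F̃(z) = z + ∑_{d ≥ 2} f(d) (F(z^d) - z^d)`. -/
noncomputable def Ftilde (z : ℂ) : ℂ :=
  z + ∑' d : ℕ, if 2 ≤ d then (f d : ℂ) * (F (z ^ d) - z ^ d) else 0


namespace Formula

def leaves : Formula → ℕ
  | .one => 1
  | .add a b => a.leaves + b.leaves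
  | .mul a b => a.leaves + b.leaves

lemma one_le_val (A : Formula) : 1 ≤ A.val := by
  induction A with
  | one => simp [val]
  | add a b ha hb => simp only [val]; omega
  | mul a b ha hb => simp only [val]; nlinarith

lemma one_le_leaves (A : Formula) : 1 ≤ A.leaves := by
  induction A with
  | one => simp [leaves]
  | add a b ha hb => simp only [leaves]; omega
  | mul a b ha hb => simp only [leaves]; omega

lemma leaves_le_val (A : Formula) (h : A.Valid) : A.leaves ≤ A.val := by
  induction A with
  | one => simp [leaves, val]
  | add a b ha hb =>
    obtain ⟨h1, h2⟩ := h
    simp only [leaves, val]; exact Nat.add_le_add (ha h1) (hb h2)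
  | mul a b ha hb =>
    obtain ⟨h1, h2, h3, h4⟩ := h
    simp only [leaves, val]
    calc a.leaves + b.leaves ≤ a.val + b.val := Nat.add_le_add (ha h1) (hb h2)
    _ ≤ a.val * b.val := by nlinarith

lemma finite_leaves_le (n : ℕ) : {A : Formula | A.leaves ≤ n}.Finite := by
  induction n with
  | zero =>
    convert Set.finite_empty
    ext A
    simpa using fun h => absurd h (by have := one_le_leaves A; omega)
  | succ n ih =>
    apply Set.Finite.subset
      (((Set.Finite.image2 Formula.add ih ih).union (Set.Finite.image2 Formula.mul ih ih)).insert
        Formula.one)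
    intro A hA
    simp only [Set.mem_setOf_eq] at hA
    cases A with
    | one => simp
    | add a b =>
      have ha := one_le_leaves a; have hb := one_le_leaves b
      simp only [leaves] at hA
      exact Set.mem_insert_of_mem _ (Or.inl (Set.mem_image2_of_mem (show _ ∈ {A : Formula | A.leaves ≤ n} by simp only [Set.mem_setOf_eq]; omega) (show _ ∈ {A : Formula | A.leaves ≤ n} by simp only [Set.mem_setOf_eq]; omega)))
    | mul a b =>
      have ha := one_le_leaves a; have hb := one_le_leaves b
      simp only [leaves] at hA
      exact Set.mem_insert_of_mem _ (Or.inr (Set.mem_image2_of_mem (show _ ∈ {A : Formula | A.leaves ≤ n} by simp only [Set.mem_setOf_eq]; omega) (show _ ∈ {A : Formula | A.leaves ≤ n} by simp only [Set.mem_setOf_eq]; omega)))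

end Formula

lemma finite_S (n : ℕ) : {A : Formula | A.Valid ∧ A.val = n}.Finite :=
  (Formula.finite_leaves_le n).subset fun A ⟨hv, he⟩ => (Formula.leaves_le_val A hv).trans he.le

lemma f_zero : f 0 = 0 := by
  have : {A : Formula | A.Valid ∧ A.val = 0} = ∅ := by
    ext A; simpa using fun _ h => absurd h (by have := Formula.one_le_val A; omega)
  simp [f, this]

lemma f_one : f 1 = 1 := by
  have : {A : Formula | A.Valid ∧ A.val = 1} = {Formula.one} := by
    ext A
    constructor
    · rintro ⟨hv, he⟩
      cases A with
      | one => rfl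
      | add a b =>
        have := Formula.one_le_val a; have := Formula.one_le_val b
        simp only [Formula.val] at he; omega
      | mul a b =>
        obtain ⟨-, -, h3, h4⟩ := hv
        simp only [Formula.val] at he; nlinarith
    · rintro rfl; exact ⟨trivial, rfl⟩
  simp [f, this]

deriving instance DecidableEq for Formula

noncomputable def sA (n : ℕ) : Finset Formula := (finite_S n).toFinset

lemma mem_sA {n : ℕ} {A : Formula} : A ∈ sA n ↔ A.Valid ∧ A.val = n := by
  simp [sA, Set.Finite.mem_toFinset]

lemma f_eq_card (n : ℕ) : f n = (sA n).card := Set.ncard_eq_toFinset_card _ (finite_S n)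

lemma add_inj : Function.Injective (fun q : Formula × Formula => Formula.add q.1 q.2) := by
  rintro ⟨a, b⟩ ⟨c, d⟩ h
  simp only [Formula.add.injEq, Prod.mk.injEq] at h ⊢
  exact h

lemma mul_inj : Function.Injective (fun q : Formula × Formula => Formula.mul q.1 q.2) := by
  rintro ⟨a, b⟩ ⟨c, d⟩ h
  simp only [Formula.mul.injEq, Prod.mk.injEq] at h ⊢
  exact h

lemma f_rec (n : ℕ) (hn : 2 ≤ n) :
    f n = (∑ p ∈ Finset.HasAntidiagonal.antidiagonal n, f p.1 * f p.2)
      + ∑ p ∈ n.divisorsAntidiagonal.filter (fun p => 2 ≤ p.1 ∧ 2 ≤ p.2), f p.1 * f p.2 := by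
  classical
  have hset : sA n =
      ((Finset.HasAntidiagonal.antidiagonal n).biUnion fun p =>
        (sA p.1 ×ˢ sA p.2).image fun q => Formula.add q.1 q.2)
      ∪ ((n.divisorsAntidiagonal.filter fun p => 2 ≤ p.1 ∧ 2 ≤ p.2).biUnion
          fun p => (sA p.1 ×ˢ sA p.2).image fun q => Formula.mul q.1 q.2) := by
    ext A
    simp only [Finset.mem_union, Finset.mem_biUnion, Finset.mem_image, Finset.mem_product,
      Finset.mem_filter, Finset.HasAntidiagonal.mem_antidiagonal, Nat.mem_divisorsAntidiagonal, mem_sA,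
      Prod.exists]
    constructor
    · rintro ⟨hv, he⟩
      cases A with
      | one => simp only [Formula.val] at he; omega
      | add a b =>
        obtain ⟨h1, h2⟩ := hv
        simp only [Formula.val] at he
        exact Or.inl ⟨a.val, b.val, he, a, b, ⟨⟨h1, rfl⟩, h2, rfl⟩, rfl⟩
      | mul a b =>
        obtain ⟨h1, h2, h3, h4⟩ := hv
        simp only [Formula.val] at he
        exact Or.inr ⟨a.val, b.val, ⟨⟨he, by omega⟩, h3, h4⟩, a, b, ⟨⟨h1, rfl⟩, h2, rfl⟩, rfl⟩
    · rintro (⟨x, y, hxy, q1, q2, ⟨⟨hv1, rfl⟩, hv2, rfl⟩, rfl⟩ |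
              ⟨x, y, ⟨⟨hxy, -⟩, hx2, hy2⟩, q1, q2, ⟨⟨hv1, rfl⟩, hv2, rfl⟩, rfl⟩)
      · exact ⟨⟨hv1, hv2⟩, hxy⟩
      · exact ⟨⟨hv1, hv2, hx2, hy2⟩, hxy⟩
  have hdisj : Disjoint
      ((Finset.HasAntidiagonal.antidiagonal n).biUnion fun p =>
        (sA p.1 ×ˢ sA p.2).image fun q => Formula.add q.1 q.2)
      ((n.divisorsAntidiagonal.filter fun p => 2 ≤ p.1 ∧ 2 ≤ p.2).biUnion
          fun p => (sA p.1 ×ˢ sA p.2).image fun q => Formula.mul q.1 q.2) := by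
    rw [Finset.disjoint_left]
    intro A hA hA'
    simp only [Finset.mem_biUnion, Finset.mem_image, Prod.exists] at hA hA'
    obtain ⟨-, -, -, q1, q2, -, rfl⟩ := hA
    obtain ⟨-, -, -, q1', q2', -, h⟩ := hA'
    exact Formula.noConfusion h
  have hd1 : ∀ p ∈ Finset.HasAntidiagonal.antidiagonal n, ∀ p' ∈ Finset.HasAntidiagonal.antidiagonal n, p ≠ p' →
      Disjoint ((sA p.1 ×ˢ sA p.2).image fun q => Formula.add q.1 q.2)
        ((sA p'.1 ×ˢ sA p'.2).image fun q => Formula.add q.1 q.2) := by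
    intro p _ p' _ hne
    rw [Finset.disjoint_left]
    intro A hA hA'
    simp only [Finset.mem_image, Finset.mem_product, mem_sA, Prod.exists] at hA hA'
    obtain ⟨q1, q2, ⟨⟨-, h1⟩, -, h2⟩, rfl⟩ := hA
    obtain ⟨q1', q2', ⟨⟨-, h1'⟩, -, h2'⟩, h⟩ := hA'
    obtain ⟨rfl, rfl⟩ : q1' = q1 ∧ q2' = q2 := by
      simpa [Formula.add.injEq] using h
    exact hne (Prod.ext (h1.symm.trans h1') (h2.symm.trans h2'))
  have hd2 : ∀ p ∈ n.divisorsAntidiagonal.filter (fun p => 2 ≤ p.1 ∧ 2 ≤ p.2),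
      ∀ p' ∈ n.divisorsAntidiagonal.filter (fun p => 2 ≤ p.1 ∧ 2 ≤ p.2), p ≠ p' →
      Disjoint ((sA p.1 ×ˢ sA p.2).image fun q => Formula.mul q.1 q.2)
        ((sA p'.1 ×ˢ sA p'.2).image fun q => Formula.mul q.1 q.2) := by
    intro p _ p' _ hne
    rw [Finset.disjoint_left]
    intro A hA hA'
    simp only [Finset.mem_image, Finset.mem_product, mem_sA, Prod.exists] at hA hA'
    obtain ⟨q1, q2, ⟨⟨-, h1⟩, -, h2⟩, rfl⟩ := hA
    obtain ⟨q1', q2', ⟨⟨-, h1'⟩, -, h2'⟩, h⟩ := hA'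
    obtain ⟨rfl, rfl⟩ : q1' = q1 ∧ q2' = q2 := by
      simpa [Formula.mul.injEq] using h
    exact hne (Prod.ext (h1.symm.trans h1') (h2.symm.trans h2'))
  rw [f_eq_card, hset, Finset.card_union_of_disjoint hdisj, Finset.card_biUnion hd1,
    Finset.card_biUnion hd2]
  congr 1 <;> refine Finset.sum_congr rfl fun p hp => ?_ <;>
    rw [Finset.card_image_of_injective _ (by first | exact add_inj | exact mul_inj),
      Finset.card_product, f_eq_card, f_eq_card]

namespace Work

def comb : ℕ → Formula
  | 0 => .one
  | n + 1 => .add .one (comb n)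

lemma comb_valid (n : ℕ) : (comb n).Valid := by
  induction n with
  | zero => trivial
  | succ n ih => exact ⟨trivial, ih⟩

lemma comb_val (n : ℕ) : (comb n).val = n + 1 := by
  induction n with
  | zero => rfl
  | succ n ih => simp only [comb, Formula.val, ih]; omega

lemma one_le_f {n : ℕ} (hn : 1 ≤ n) : 1 ≤ f n := by
  refine (Set.ncard_pos (finite_S n)).mpr ⟨comb (n - 1), comb_valid _, ?_⟩
  rw [comb_val]; omega

/-- coefficients of the square -/
noncomputable def c (n : ℕ) : ℕ := ∑ p ∈ Finset.HasAntidiagonal.antidiagonal n, f p.1 * f p.2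

/-- coefficients of the multiplicative part -/
noncomputable def m (n : ℕ) : ℕ :=
  ∑ p ∈ n.divisorsAntidiagonal.filter (fun p => 2 ≤ p.1 ∧ 2 ≤ p.2), f p.1 * f p.2

lemma c_zero : c 0 = 0 := by simp [c, f_zero]

lemma c_one : c 1 = 0 := by
  simp [c, Finset.Nat.antidiagonal_succ, f_zero]

lemma m_zero : m 0 = 0 := by simp [m]

lemma m_one : m 1 = 0 := by
  have h : (Nat.divisorsAntidiagonal 1).filter (fun p => 2 ≤ p.1 ∧ 2 ≤ p.2) = ∅ := by
    rw [Finset.filter_eq_empty_iff]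
    intro p hp
    rw [Nat.mem_divisorsAntidiagonal] at hp
    rintro ⟨h1, h2⟩
    nlinarith [hp.1]
  simp [m, h]

lemma f_eq_cm {n : ℕ} (hn : 2 ≤ n) : f n = c n + m n := f_rec n hn

end Work

namespace Work
noncomputable def H (z : ℂ) (p : ℕ × ℕ) : ℂ :=
  if 2 ≤ p.1 ∧ 2 ≤ p.2 then (f p.1 : ℂ) * (f p.2 : ℂ) * z ^ (p.1 * p.2) else 0
end Work

set_option maxHeartbeats 2000000 in
open Work in
/-- Inside the disc of convergence of `F` (i.e. for `z` with `‖z‖ < R`, `R` the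
radius of convergence of `F`), one has `F(z)^2 - F(z) + F̃(z) = 0`. -/
theorem stmt7 (z : ℂ)
    (hz : ∃ r : ℝ, ‖z‖ < r ∧ Summable fun n : ℕ => (f n : ℝ) * r ^ n) :
    F z ^ 2 - F z + Ftilde z = 0 := by
  classical
  obtain ⟨r, hzr, hsum⟩ := hz
  have hz0 : (0 : ℝ) ≤ ‖z‖ := norm_nonneg z
  have hr0 : 0 < r := lt_of_le_of_lt hz0 hzr
  -- ‖z‖ < 1
  have hz1 : ‖z‖ < 1 := by
    rcases le_or_gt r 1 with h | h
    · exact lt_of_lt_of_le hzr h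
    · exfalso
      have h1 : ∀ᶠ n : ℕ in Filter.atTop, (f n : ℝ) * r ^ n < 1 :=
        hsum.tendsto_atTop_zero.eventually_lt_const one_pos
      obtain ⟨n, hn1, hn2⟩ := (h1.and (Filter.eventually_ge_atTop 1)).exists
      have hf1 : (1 : ℝ) ≤ f n := by exact_mod_cast one_le_f hn2
      have hrn : (1 : ℝ) ≤ r ^ n := one_le_pow₀ h.le
      nlinarith
  -- summability of ‖f n * w^n‖ for ‖w‖ ≤ ‖z‖
  have hS : ∀ w : ℂ, ‖w‖ ≤ ‖z‖ → Summable fun n : ℕ => ‖(f n : ℂ) * w ^ n‖ := by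
    intro w hw
    refine Summable.of_nonneg_of_le (fun n => norm_nonneg _) (fun n => ?_) hsum
    rw [norm_mul, norm_pow, Complex.norm_natCast]
    have : ‖w‖ ^ n ≤ r ^ n := pow_le_pow_left₀ (norm_nonneg w) (hw.trans hzr.le) n
    exact mul_le_mul_of_nonneg_left this (Nat.cast_nonneg _)
  have hSz := hS z le_rfl
  have hSz' : Summable fun n : ℕ => (f n : ℂ) * z ^ n := hSz.of_norm
  -- real version
  have hSr : Summable fun n : ℕ => (f n : ℝ) * ‖z‖ ^ n := by
    have := hSz
    simpa [norm_mul, norm_pow, Complex.norm_natCast] using this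
  -- Step 1 : Cauchy product
  have hsq : F z ^ 2 = ∑' n : ℕ, ((c n : ℂ) * z ^ n) := by
    rw [sq, F, tsum_mul_tsum_eq_tsum_sum_antidiagonal_of_summable_norm hSz hSz]
    refine tsum_congr fun n => ?_
    rw [c]
    push_cast
    rw [Finset.sum_mul]
    refine Finset.sum_congr rfl fun p hp => ?_
    rw [Finset.HasAntidiagonal.mem_antidiagonal] at hp
    rw [← hp, pow_add]
    ring
  have hsq_summable : Summable fun n : ℕ => (c n : ℂ) * z ^ n := by
    have h := summable_norm_sum_mul_antidiagonal_of_summable_norm hSz hSz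
    have := h.of_norm
    refine this.congr fun n => ?_
    rw [c]
    push_cast
    rw [Finset.sum_mul]
    refine Finset.sum_congr rfl fun p hp => ?_
    rw [Finset.HasAntidiagonal.mem_antidiagonal] at hp
    rw [← hp, pow_add]
    ring
  -- Step 2 : summability of H
  have hHnorm : Summable fun p : ℕ × ℕ => ‖H z p‖ := by
    have hmaj : Summable fun p : ℕ × ℕ =>
        ((f p.1 : ℝ) * ‖z‖ ^ p.1) * ((f p.2 : ℝ) * ‖z‖ ^ p.2) :=
      hSr.mul_of_nonneg hSr (fun n => by positivity) (fun n => by positivity)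
    refine Summable.of_nonneg_of_le (fun p => norm_nonneg _) (fun p => ?_) hmaj
    rcases p with ⟨d, k⟩
    by_cases hp : 2 ≤ d ∧ 2 ≤ k
    · rw [H, if_pos hp, norm_mul, norm_mul, norm_pow, Complex.norm_natCast,
        Complex.norm_natCast]
      have hdk : d + k ≤ d * k := by nlinarith [hp.1, hp.2]
      have : ‖z‖ ^ (d * k) ≤ ‖z‖ ^ (d + k) :=
        pow_le_pow_of_le_one hz0 hz1.le hdk
      calc (f d : ℝ) * (f k : ℝ) * ‖z‖ ^ (d * k)
          ≤ (f d : ℝ) * (f k : ℝ) * ‖z‖ ^ (d + k) := by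
            exact mul_le_mul_of_nonneg_left this (by positivity)
        _ = (f d : ℝ) * ‖z‖ ^ d * ((f k : ℝ) * ‖z‖ ^ k) := by rw [pow_add]; ring
    · rw [H, if_neg hp, norm_zero]
      positivity
  have hH : Summable (H z) := hHnorm.of_norm
  -- Step 3 : per-d identity
  have hd : ∀ d : ℕ, 2 ≤ d → (f d : ℂ) * (F (z ^ d) - z ^ d) = ∑' k : ℕ, H z (d, k) := by
    intro d hd2
    have hzd : ‖z ^ d‖ ≤ ‖z‖ := by
      rw [norm_pow]
      calc ‖z‖ ^ d ≤ ‖z‖ ^ 1 := pow_le_pow_of_le_one hz0 hz1.le (by omega)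
        _ = ‖z‖ := pow_one _
    have hg : Summable fun k : ℕ => (f k : ℂ) * z ^ (d * k) := by
      have := (hS _ hzd).of_norm
      refine this.congr fun k => ?_
      rw [← pow_mul]
    have hgt : Summable fun k : ℕ => if 2 ≤ k then (f k : ℂ) * z ^ (d * k) else 0 := by
      refine Summable.of_norm_bounded hg.norm fun k => ?_
      split
      · exact le_rfl
      · simp only [norm_zero]
        positivity
    have hsingle : Summable fun k : ℕ => if k = 1 then (z : ℂ) ^ d else 0 :=
      summable_of_ne_finset_zero (s := {1}) (by intro k hk; simp at hk; simp [hk])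
    have hFzd : F (z ^ d) = (∑' k : ℕ, if 2 ≤ k then (f k : ℂ) * z ^ (d * k) else 0) + z ^ d := by
      rw [F]
      have hsplit : ∀ k : ℕ, (f k : ℂ) * (z ^ d) ^ k =
          (if 2 ≤ k then (f k : ℂ) * z ^ (d * k) else 0) + (if k = 1 then z ^ d else 0) := by
        intro k
        rw [← pow_mul]
        match k with
        | 0 => simp [f_zero]
        | 1 => simp [f_one]
        | (n + 2) => simp
      calc ∑' k : ℕ, (f k : ℂ) * (z ^ d) ^ k
          = ∑' k : ℕ, ((if 2 ≤ k then (f k : ℂ) * z ^ (d * k) else 0)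
            + (if k = 1 then z ^ d else 0)) := tsum_congr hsplit
        _ = (∑' k : ℕ, if 2 ≤ k then (f k : ℂ) * z ^ (d * k) else 0)
            + ∑' k : ℕ, (if k = 1 then (z : ℂ) ^ d else 0) := Summable.tsum_add hgt hsingle
        _ = _ := by rw [tsum_ite_eq]
    rw [hFzd]
    rw [add_sub_cancel_right, ← tsum_mul_left]
    refine tsum_congr fun k => ?_
    rw [H]
    by_cases hk : 2 ≤ k
    · simp only [hk, if_pos, and_true, hd2, true_and, if_true]
      ring
    · simp [hk, hd2]
  -- Step 4 : Ftilde in terms of H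
  have hFt : Ftilde z = z + ∑' p : ℕ × ℕ, H z p := by
    rw [Ftilde, Summable.tsum_prod' hH (fun b => hH.prod_factor b)]
    congr 1
    refine tsum_congr fun d => ?_
    by_cases hd2 : 2 ≤ d
    · rw [if_pos hd2, hd d hd2]
    · rw [if_neg hd2]
      have h0 : ∀ k, H z (d, k) = 0 := fun k => by
        rw [H, if_neg (fun hc => hd2 hc.1)]
      simp [h0]
  -- Step 5 : fiberwise
  have hcoef : ∀ n : ℕ, (∑' p : (fun p : ℕ × ℕ => p.1 * p.2) ⁻¹' {n}, H z p) =
      (m n : ℂ) * z ^ n := by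
    intro n
    rcases Nat.eq_zero_or_pos n with rfl | hn
    · have h0 : ∀ x : (fun p : ℕ × ℕ => p.1 * p.2) ⁻¹' {(0 : ℕ)}, H z x.val = 0 := by
        rintro ⟨⟨a, b⟩, hab⟩
        show H z (a, b) = 0
        have hab' : a * b = 0 := hab
        rw [H, if_neg]
        rintro ⟨h1, h2⟩
        rcases Nat.mul_eq_zero.mp hab' with rfl | rfl <;> omega
      rw [show (∑' p : (fun p : ℕ × ℕ => p.1 * p.2) ⁻¹' {(0 : ℕ)}, H z p) = 0 by
          rw [tsum_congr h0]; exact tsum_zero, m_zero]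
      simp
    · have hn0 : n ≠ 0 := hn.ne'
      rw [show (fun p : ℕ × ℕ => p.1 * p.2) ⁻¹' {n} = ↑n.divisorsAntidiagonal by
          ext p; simp [Nat.mem_divisorsAntidiagonal, hn0],
        Finset.tsum_subtype' n.divisorsAntidiagonal (H z)]
      have hterm : ∀ p ∈ n.divisorsAntidiagonal,
          H z p = (if 2 ≤ p.1 ∧ 2 ≤ p.2 then ((f p.1 : ℂ) * (f p.2 : ℂ)) else 0) * z ^ n := by
        intro p hp
        rw [Nat.mem_divisorsAntidiagonal] at hp
        rw [H, ← hp.1]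
        split
        · rfl
        · rw [zero_mul]
      rw [Finset.sum_congr rfl hterm, ← Finset.sum_mul, m, ← Finset.sum_filter]
      push_cast
      rfl
  have hfibSum := hH.hasSum.tsum_fiberwise (fun p => p.1 * p.2)
  simp only [hcoef] at hfibSum
  have hms : Summable fun n : ℕ => (m n : ℂ) * z ^ n := hfibSum.summable
  have hfib : (∑' n : ℕ, (m n : ℂ) * z ^ n) = ∑' p : ℕ × ℕ, H z p := hfibSum.tsum_eq
  -- Step 6 : decomposition of F z
  have hwhen : ∀ n : ℕ, (f n : ℂ) * z ^ n
      = ((c n : ℂ) + (m n : ℂ)) * z ^ n + (if n = 1 then z else 0) := by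
    intro n
    match n with
    | 0 => simp [f_zero, c_zero, m_zero]
    | 1 => simp [f_one, c_one, m_one]
    | (k + 2) =>
      rw [f_eq_cm (by omega)]
      push_cast
      simp
  have hsum_cm : Summable fun n : ℕ => ((c n : ℂ) + (m n : ℂ)) * z ^ n :=
    (hsq_summable.add hms).congr fun n => by ring
  have hsingle1 : Summable fun n : ℕ => if n = 1 then z else 0 :=
    summable_of_ne_finset_zero (s := {1}) (by intro k hk; simp at hk; simp [hk])
  have hFdecomp : F z = (∑' n : ℕ, ((c n : ℂ) + (m n : ℂ)) * z ^ n) + z := by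
    rw [F, tsum_congr hwhen, Summable.tsum_add hsum_cm hsingle1, tsum_ite_eq]
  have hsplit2 : (∑' n : ℕ, ((c n : ℂ) + (m n : ℂ)) * z ^ n)
      = (∑' n : ℕ, (c n : ℂ) * z ^ n) + ∑' n : ℕ, (m n : ℂ) * z ^ n := by
    rw [← Summable.tsum_add hsq_summable hms]
    exact tsum_congr fun n => by ring
  rw [hsq, hFdecomp, hsplit2, hFt, ← hfib]
  ring
end

section
/- Fix ε > 0 and let c = (1-ε)/log 4. Then the number of positive integers n ≤ x such that there exists an arithmetic exponential formula for n of length less than c·log n is O(x^{1-ε}) as x → ∞. In particular, for almost all n, the shortest arithmetic exponential formula for n has length at least log n / log 4. -/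
/-- Arithmetic exponential formulas: built from 1, addition, multiplication
and exponentiation. -/
inductive ExpFormula : Type
  | one : ExpFormula
  | add : ExpFormula → ExpFormula → ExpFormula
  | mul : ExpFormula → ExpFormula → ExpFormula
  | pow : ExpFormula → ExpFormula → ExpFormula

/-- The value of an arithmetic exponential formula. -/
def ExpFormula.val : ExpFormula → ℕ
  | .one => 1
  | .add a b => a.val + b.val
  | .mul a b => a.val * b.val
  | .pow a b => a.val ^ b.val

/-- Validity: `1` is never an argument of a multiplication or an exponentiation. -/
def ExpFormula.Valid : ExpFormula → Prop
  | .one => True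
  | .add a b => a.Valid ∧ b.Valid
  | .mul a b => a.Valid ∧ b.Valid ∧ 2 ≤ a.val ∧ 2 ≤ b.val
  | .pow a b => a.Valid ∧ b.Valid ∧ 2 ≤ a.val ∧ 2 ≤ b.val

/-- The length (number of nodes) of an arithmetic exponential formula. -/
def ExpFormula.size : ExpFormula → ℕ
  | .one => 1
  | .add a b => a.size + b.size + 1
  | .mul a b => a.size + b.size + 1
  | .pow a b => a.size + b.size + 1

namespace ExpFormula

/-- Polish-notation encoding of a formula as a list of symbols. -/
def enc : ExpFormula → List (Fin 4)
  | .one => [0]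
  | .add a b => 1 :: (enc a ++ enc b)
  | .mul a b => 2 :: (enc a ++ enc b)
  | .pow a b => 3 :: (enc a ++ enc b)

lemma enc_length : ∀ E : ExpFormula, E.enc.length = E.size
  | .one => rfl
  | .add a b => by simp [enc, size, enc_length a, enc_length b]
  | .mul a b => by simp [enc, size, enc_length a, enc_length b]
  | .pow a b => by simp [enc, size, enc_length a, enc_length b]

lemma one_le_size : ∀ E : ExpFormula, 1 ≤ E.size
  | .one => le_refl _
  | .add a b => by simp [size]
  | .mul a b => by simp [size]
  | .pow a b => by simp [size]

/-- The encoding is prefix-free, hence uniquely decodable. -/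
lemma enc_prefix : ∀ (E E' : ExpFormula) (l l' : List (Fin 4)),
    E.enc ++ l = E'.enc ++ l' → E = E'
  | .one, .one, _, _, _ => rfl
  | .one, .add _ _, _, _, h => by simp [enc] at h
  | .one, .mul _ _, _, _, h => by simp [enc] at h
  | .one, .pow _ _, _, _, h => by simp [enc] at h
  | .add _ _, .one, _, _, h => by simp [enc] at h
  | .add a b, .add a' b', l, l', h => by
    simp only [enc, List.cons_append, List.cons.injEq, List.append_assoc] at h
    obtain ⟨-, h⟩ := h
    obtain rfl := enc_prefix a a' _ _ h
    obtain rfl := enc_prefix b b' _ _ (List.append_cancel_left h)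
    rfl
  | .add _ _, .mul _ _, _, _, h => by simp [enc] at h
  | .add _ _, .pow _ _, _, _, h => by simp [enc] at h
  | .mul _ _, .one, _, _, h => by simp [enc] at h
  | .mul _ _, .add _ _, _, _, h => by simp [enc] at h
  | .mul a b, .mul a' b', l, l', h => by
    simp only [enc, List.cons_append, List.cons.injEq, List.append_assoc] at h
    obtain ⟨-, h⟩ := h
    obtain rfl := enc_prefix a a' _ _ h
    obtain rfl := enc_prefix b b' _ _ (List.append_cancel_left h)
    rfl
  | .mul _ _, .pow _ _, _, _, h => by simp [enc] at h
  | .pow _ _, .one, _, _, h => by simp [enc] at h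
  | .pow _ _, .add _ _, _, _, h => by simp [enc] at h
  | .pow _ _, .mul _ _, _, _, h => by simp [enc] at h
  | .pow a b, .pow a' b', l, l', h => by
    simp only [enc, List.cons_append, List.cons.injEq, List.append_assoc] at h
    obtain ⟨-, h⟩ := h
    obtain rfl := enc_prefix a a' _ _ h
    obtain rfl := enc_prefix b b' _ _ (List.append_cancel_left h)
    rfl

end ExpFormula

/-- The number of `n ≤ x` admitting an arithmetic exponential formula of length
less than `(1-ε)/log 4 · log n` is `O(x^{1-ε})`. In particular, for almost all
`n` the shortest such formula has length at least `log n / log 4`. -/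
theorem stmt9 (ε : ℝ) (hε : 0 < ε) :
    ∃ C : ℝ, ∀ x : ℝ, 2 ≤ x →
      ({n : ℕ | 1 ≤ n ∧ (n : ℝ) ≤ x ∧ ∃ E : ExpFormula, E.Valid ∧ E.val = n ∧
          (E.size : ℝ) < (1 - ε) / Real.log 4 * Real.log n}.ncard : ℝ)
        ≤ C * x ^ (1 - ε) := by
  classical
  set c : ℝ := (1 - ε) / Real.log 4 with hc
  have hlog4 : 0 < Real.log 4 := Real.log_pos (by norm_num)
  refine ⟨4, fun x hx => ?_⟩
  have hx0 : (0:ℝ) < x := by linarith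
  have hx1 : (1:ℝ) ≤ x := by linarith
  have hxpow : 0 < x ^ (1 - ε) := Real.rpow_pos_of_pos hx0 _
  set S := {n : ℕ | 1 ≤ n ∧ (n : ℝ) ≤ x ∧ ∃ E : ExpFormula, E.Valid ∧ E.val = n ∧
      (E.size : ℝ) < c * Real.log n} with hS
  by_cases hε1 : 1 ≤ ε
  · -- then `c ≤ 0` and the set is empty
    have hc0 : c ≤ 0 := div_nonpos_of_nonpos_of_nonneg (by linarith) hlog4.le
    have hSe : S = ∅ := by
      rw [Set.eq_empty_iff_forall_notMem]
      rintro n ⟨hn1, -, E, -, -, hsize⟩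
      have hlogn : 0 ≤ Real.log n := Real.log_natCast_nonneg n
      have h1 : (1:ℝ) ≤ (E.size : ℝ) := by exact_mod_cast E.one_le_size
      nlinarith [mul_nonpos_of_nonpos_of_nonneg hc0 hlogn]
    rw [hSe]
    simp only [Set.ncard_empty, Nat.cast_zero]
    positivity
  · -- main case: `0 < c`
    push_neg at hε1
    have hc0 : 0 < c := div_pos (by linarith) hlog4
    have hlogx : 0 ≤ Real.log x := Real.log_nonneg hx1
    set M : ℕ := ⌊c * Real.log x⌋₊ with hM
    set L : ℕ := M + 1 with hL
    set P : ℕ → Prop := fun n => ∃ E : ExpFormula, E.Valid ∧ E.val = n ∧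
        (E.size : ℝ) < c * Real.log n with hP
    set f : ℕ → List (Fin 4) := fun n =>
      if h : P n then h.choose.enc ++ List.replicate (L - h.choose.enc.length) 0
      else [] with hf
    -- for n ∈ S, f n has length exactly L
    have key : ∀ n ∈ S, ∃ (h : P n),
        f n = h.choose.enc ++ List.replicate (L - h.choose.enc.length) 0 ∧
        (f n).length = L := by
      rintro n ⟨hn1, hnx, hPn⟩
      refine ⟨hPn, dif_pos hPn, ?_⟩
      obtain ⟨hv, hval, hsize⟩ := hPn.choose_spec
      have hlogn : Real.log n ≤ Real.log x :=
        Real.log_le_log (by exact_mod_cast hn1) hnx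
      have hsx : (hPn.choose.size : ℝ) ≤ c * Real.log x := by
        nlinarith
      have hMle : hPn.choose.enc.length ≤ M := by
        rw [ExpFormula.enc_length]
        exact Nat.le_floor hsx
      have hfn : f n = hPn.choose.enc ++ List.replicate (L - hPn.choose.enc.length) 0 :=
        dif_pos hPn
      rw [hfn]
      simp only [List.length_append, List.length_replicate]
      omega
    -- injection into lists of length L
    have hcard : S.ncard ≤ 4 ^ L := by
      have h1 : S.ncard ≤ (Set.range
          (List.Vector.toList : List.Vector (Fin 4) L → List (Fin 4))).ncard := by
        apply Set.ncard_le_ncard_of_injOn f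
        · intro n hn
          obtain ⟨h, -, hlen⟩ := key n hn
          exact ⟨⟨f n, hlen⟩, rfl⟩
        · intro n hn m hm hfe
          obtain ⟨h1, he1, -⟩ := key n hn
          obtain ⟨h2, he2, -⟩ := key m hm
          rw [he1, he2] at hfe
          have := ExpFormula.enc_prefix _ _ _ _ hfe
          have e1 := h1.choose_spec.2.1
          have e2 := h2.choose_spec.2.1
          rw [← e1, ← e2, this]
      calc S.ncard ≤ _ := h1
        _ = Nat.card (List.Vector (Fin 4) L) := by
            rw [← Nat.card_coe_set_eq,
              Nat.card_range_of_injective List.Vector.toList_injective]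
        _ = 4 ^ L := by simp [Nat.card_eq_fintype_card]
    -- now the real estimate
    have h2 : ((4:ℝ)) ^ (M:ℝ) ≤ x ^ (1 - ε) := by
      have : ((4:ℝ)) ^ (M:ℝ) ≤ (4:ℝ) ^ (c * Real.log x) :=
        Real.rpow_le_rpow_of_exponent_le (by norm_num)
          (Nat.floor_le (by positivity))
      refine this.trans_eq ?_
      rw [Real.rpow_def_of_pos (by norm_num : (0:ℝ) < 4),
        Real.rpow_def_of_pos hx0, hc]
      congr 1
      field_simp
    calc (S.ncard : ℝ) ≤ (4:ℝ) ^ L := by exact_mod_cast hcard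
      _ = 4 * (4:ℝ) ^ (M:ℝ) := by
          rw [Real.rpow_natCast, hL, pow_succ]; ring
      _ ≤ 4 * x ^ (1 - ε) := by nlinarith
end

section
/- For every ε > 0 and for almost all positive integers n (i.e., for all n ≤ x with at most o(x) exceptions as x → ∞), the length of the Goodstein encoding satisfies S_FCF(n) ≥ (1/(4(log 2)²) - ε) · log n · log log n. -/
/-- `s2 n` is the number of ones in the binary expansion of `n`. -/
def s2 (n : ℕ) : ℕ := (Nat.digits 2 n).sum

lemma s2_eq_card (L n : ℕ) (h : n < 2^L) :
    ((Finset.range L).filter (fun j => n.testBit j)).card = s2 n := by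
  induction L generalizing n with
  | zero =>
    interval_cases n
    simp [s2]
  | succ L ih =>
    rcases Nat.eq_zero_or_pos n with rfl | hn
    · simp [s2]
    · have hdiv : n / 2 < 2 ^ L := by
        have : n < 2 * 2 ^ L := by rw [pow_succ] at h; omega
        omega
      have hrec : s2 n = n % 2 + s2 (n / 2) := by
        unfold s2
        rw [Nat.digits_def' (by norm_num : (1:ℕ) < 2) hn]
        simp
      rw [hrec, ← ih _ hdiv]
      rw [Finset.card_filter, Finset.card_filter]
      rw [Finset.sum_range_succ']
      have h0 : (if n.testBit 0 then 1 else 0) = n % 2 := by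
        rw [Nat.testBit_zero]
        rcases Nat.mod_two_eq_zero_or_one n with h' | h' <;> simp [h']
      have h1 : ∀ i, (if n.testBit (i+1) then 1 else 0) = (if (n/2).testBit i then 1 else 0) := by
        intro i; rw [Nat.testBit_succ]
      simp only [h1, h0]
      omega

noncomputable def cR (j n : ℕ) : ℝ := (if n.testBit j then (1:ℝ) else 0) - 1/2

lemma cR_sq (j n : ℕ) : cR j n * cR j n = 1/4 := by
  unfold cR; rcases Bool.eq_false_or_eq_true (n.testBit j) with h | h <;> simp [h] <;> norm_num

lemma cR_xor_ne (j k n : ℕ) (hjk : j ≠ k) : cR j (n ^^^ 2^k) = cR j n := by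
  unfold cR
  rw [Nat.testBit_xor, Nat.testBit_two_pow_of_ne (fun h => hjk h.symm)]
  simp

lemma cR_xor_self (k n : ℕ) : cR k (n ^^^ 2^k) = - cR k n := by
  unfold cR
  rw [Nat.testBit_xor, Nat.testBit_two_pow_self]
  rcases Bool.eq_false_or_eq_true (n.testBit k) with h | h <;> simp [h] <;> norm_num

lemma cross_sum (L j k : ℕ) (hk : k < L) (hjk : j ≠ k) :
    ∑ n ∈ Finset.range (2^L), cR j n * cR k n = 0 := by
  have key : ∑ n ∈ Finset.range (2^L), cR j n * cR k n
      = ∑ n ∈ Finset.range (2^L), cR j (n ^^^ 2^k) * cR k (n ^^^ 2^k) := by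
    apply Finset.sum_nbij' (fun n => n ^^^ 2^k) (fun n => n ^^^ 2^k)
    · intro a ha
      simp only [Finset.mem_range] at ha ⊢
      exact Nat.xor_lt_two_pow ha (Nat.pow_lt_pow_right (by norm_num) hk)
    · intro a ha
      simp only [Finset.mem_range] at ha ⊢
      exact Nat.xor_lt_two_pow ha (Nat.pow_lt_pow_right (by norm_num) hk)
    · intro a _; exact xor_cancel_right _ _
    · intro a _; exact xor_cancel_right _ _
    · intro a _; rw [xor_cancel_right]
  have : ∀ n, cR j (n ^^^ 2^k) * cR k (n ^^^ 2^k) = -(cR j n * cR k n) := by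
    intro n; rw [cR_xor_ne _ _ _ hjk, cR_xor_self]; ring
  simp only [this, Finset.sum_neg_distrib] at key
  linarith

lemma variance_sum (L : ℕ) (P : Finset ℕ) (hP : P ⊆ Finset.range L) :
    ∑ n ∈ Finset.range (2^L), (∑ j ∈ P, cR j n)^2 = 2^L * P.card / 4 := by
  have expand : ∀ n, (∑ j ∈ P, cR j n)^2 = ∑ j ∈ P, ∑ k ∈ P, cR j n * cR k n := by
    intro n; rw [sq, Finset.sum_mul_sum]
  simp only [expand]
  rw [Finset.sum_comm]
  have inner : ∀ j ∈ P, ∑ n ∈ Finset.range (2^L), ∑ k ∈ P, cR j n * cR k n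
      = ∑ k ∈ P, ∑ n ∈ Finset.range (2^L), cR j n * cR k n := fun j _ => Finset.sum_comm
  rw [Finset.sum_congr rfl inner]
  have diag : ∀ j ∈ P, ∑ k ∈ P, ∑ n ∈ Finset.range (2^L), cR j n * cR k n = 2^L/4 := by
    intro j hj
    have : ∀ k ∈ P, ∑ n ∈ Finset.range (2^L), cR j n * cR k n
        = if k = j then (2:ℝ)^L/4 else 0 := by
      intro k hk
      by_cases hkj : k = j
      · subst hkj
        simp only [cR_sq, Finset.sum_const, Finset.card_range, nsmul_eq_mul, if_pos rfl]
        push_cast; ring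
      · rw [if_neg hkj, cross_sum L j k (Finset.mem_range.mp (hP hk)) (fun h => hkj h.symm)]
    rw [Finset.sum_congr rfl this, Finset.sum_ite_eq' P j (fun _ => (2:ℝ)^L/4), if_pos hj]
  rw [Finset.sum_congr rfl diag, Finset.sum_const, nsmul_eq_mul]
  ring

lemma cheb_count (L : ℕ) (P : Finset ℕ) (hP : P ⊆ Finset.range L) (δ : ℝ) (hδ : 0 < δ)
    (hPc : 0 < P.card) :
    (((Finset.range (2^L)).filter
      (fun n => (∑ j ∈ P, if n.testBit j then (1:ℝ) else 0) < (1/2 - δ) * P.card)).card : ℝ)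
      ≤ 2^L / (4 * δ^2 * P.card) := by
  set p : ℝ := (P.card : ℝ) with hp
  set bad := (Finset.range (2^L)).filter
      (fun n => (∑ j ∈ P, if n.testBit j then (1:ℝ) else 0) < (1/2 - δ) * P.card) with hbad
  have hppos : 0 < p := by rw [hp]; exact_mod_cast hPc
  have hlow : ∀ n ∈ bad, δ^2 * p^2 ≤ (∑ j ∈ P, cR j n)^2 := by
    intro n hn
    have hn' := (Finset.mem_filter.mp hn).2
    have hsum : ∑ j ∈ P, cR j n = (∑ j ∈ P, if n.testBit j then (1:ℝ) else 0) - p/2 := by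
      unfold cR
      rw [Finset.sum_sub_distrib, Finset.sum_const, nsmul_eq_mul]
      ring
    have h2 : ∑ j ∈ P, cR j n < -(δ * p) := by rw [hsum]; nlinarith
    nlinarith [sq_nonneg ((∑ j ∈ P, cR j n) + δ * p), mul_pos hδ hppos]
  have step1 : (bad.card : ℝ) * (δ^2 * p^2) ≤ 2^L * p / 4 := by
    have e1 : (bad.card : ℝ) * (δ^2 * p^2) = ∑ _x ∈ bad, (δ^2 * p^2) := by
      rw [Finset.sum_const, nsmul_eq_mul]
    rw [e1]
    have e2 : ∑ x ∈ bad, (δ^2 * p^2) ≤ ∑ n ∈ bad, (∑ j ∈ P, cR j n)^2 :=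
      Finset.sum_le_sum hlow
    have e3 : ∑ n ∈ bad, (∑ j ∈ P, cR j n)^2 ≤ ∑ n ∈ Finset.range (2^L), (∑ j ∈ P, cR j n)^2 := by
      apply Finset.sum_le_sum_of_subset_of_nonneg (Finset.filter_subset _ _)
      intro i _ _; positivity
    rw [← variance_sum L P hP]
    linarith
  rw [le_div_iff₀ (by positivity)]
  nlinarith

section Sbounds
variable (S : ℕ → ℕ)
variable (hS : ∀ n : ℕ, 1 ≤ n → S n = s2 n - 1 +
      ∑ j ∈ (Finset.range n).filter (fun j => n.testBit j),
        (if j = 0 then 1 else if j = 1 then 3 else 4 + S j))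

include hS

lemma s2_le_S (j : ℕ) (hj : 1 ≤ j) : s2 j ≤ S j + 1 := by
  have := hS j hj
  omega

lemma sum_s2_le_S (n : ℕ) (hn : 1 ≤ n) (Q : Finset ℕ)
    (hQ : ∀ j ∈ Q, 2 ≤ j ∧ n.testBit j = true) :
    ∑ j ∈ Q, s2 j ≤ S n := by
  have hsub : Q ⊆ (Finset.range n).filter (fun j => n.testBit j) := by
    intro j hj
    obtain ⟨h2, hb⟩ := hQ j hj
    have h1 : 2^j ≤ n := Nat.ge_two_pow_of_testBit hb
    have h2' : j < 2^j := Nat.lt_two_pow_self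
    exact Finset.mem_filter.mpr ⟨Finset.mem_range.mpr (lt_of_lt_of_le h2' h1), hb⟩
  have step1 : ∑ j ∈ Q, s2 j ≤ ∑ j ∈ Q, (if j = 0 then 1 else if j = 1 then 3 else 4 + S j) := by
    apply Finset.sum_le_sum
    intro j hj
    obtain ⟨h2, _⟩ := hQ j hj
    rw [if_neg (by omega), if_neg (by omega)]
    have := s2_le_S S hS j (by omega)
    omega
  have step2 : ∑ j ∈ Q, (if j = 0 then 1 else if j = 1 then 3 else 4 + S j)
      ≤ ∑ j ∈ (Finset.range n).filter (fun j => n.testBit j),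
        (if j = 0 then 1 else if j = 1 then 3 else 4 + S j) :=
    Finset.sum_le_sum_of_subset hsub
  have := hS n hn
  omega

end Sbounds

set_option maxHeartbeats 1600000 in
/-- Let `S` be the length of the Goodstein (first canonical form) encoding,
as specified by its defining recursion. For every `ε > 0`, for almost all
positive integers `n` (with `o(x)` exceptions up to `x`),
`S n ≥ (1/(4 (log 2)²) - ε) · log n · log log n`. -/
theorem stmt13 (S : ℕ → ℕ) (hS0 : S 0 = 0)
    (hS : ∀ n : ℕ, 1 ≤ n → S n = s2 n - 1 +
      ∑ j ∈ (Finset.range n).filter (fun j => n.testBit j),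
        (if j = 0 then 1 else if j = 1 then 3 else 4 + S j))
    (ε : ℝ) (hε : 0 < ε) :
    (fun x : ℝ => (((Finset.Icc 1 ⌊x⌋₊).filter
        (fun n => (S n : ℝ) <
          (1 / (4 * Real.log 2 ^ 2) - ε) * Real.log n * Real.log (Real.log n))).card : ℝ))
      =o[Filter.atTop] fun x : ℝ => x := by
  have hl2 : (0:ℝ) < Real.log 2 := Real.log_pos (by norm_num)
  have hl2' : Real.log 2 < 1 := by
    have := Real.log_two_lt_d9; linarith
  set l2 := Real.log 2 with hl2def
  set δ : ℝ := min (ε * l2^2 / 2) (1/8) with hδdef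
  have hδ0 : 0 < δ := lt_min (by positivity) (by norm_num)
  have hδ8 : δ ≤ 1/8 := min_le_right _ _
  have hδε : 2 * δ ≤ ε * l2^2 := by
    have := min_le_left (ε * l2^2 / 2) (1/8); linarith [this]
  rw [Asymptotics.isLittleO_iff]
  intro c hc
  obtain ⟨K1, hK1⟩ := exists_nat_ge (1/(2*δ^3))
  obtain ⟨K2, hK2⟩ := exists_nat_ge (2/δ)
  obtain ⟨K3, hK3⟩ := exists_nat_ge (2/(δ^2*(1-2*δ)*c))
  set L0 : ℕ := max (2^K1) (max K2 (max 2 K3)) with hL0def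
  have hδhalf : 2*δ < 1 := by linarith
  filter_upwards [Filter.eventually_ge_atTop ((2:ℝ)^L0),
    Filter.eventually_ge_atTop (8/c), Filter.eventually_ge_atTop (1:ℝ)] with x hxL0 hxc hx1
  set M := ⌊x⌋₊ with hMdef
  have hx0 : (0:ℝ) ≤ x := by linarith
  have hMx : (M:ℝ) ≤ x := Nat.floor_le hx0
  have hM1 : 1 ≤ M := Nat.le_floor (by exact_mod_cast hx1)
  have hML0 : 2^L0 ≤ M := Nat.le_floor (by exact_mod_cast hxL0)
  set L := Nat.log 2 M + 1 with hLdef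
  have hML : M < 2^L := Nat.lt_pow_succ_log_self (by norm_num) M
  have h2L : (2:ℝ)^L ≤ 2*x := by
    have h2 : (2:ℕ)^(Nat.log 2 M) ≤ M := Nat.pow_log_le_self 2 (by omega)
    have h2' : ((2:ℝ))^(Nat.log 2 M) ≤ M := by exact_mod_cast h2
    have h1 : (2:ℝ)^L = 2 * 2^(Nat.log 2 M) := by rw [hLdef, pow_succ]; ring
    rw [h1]
    linarith
  have hLL0 : L0 ≤ L := by
    have : Nat.log 2 (2^L0) ≤ Nat.log 2 M := Nat.log_mono_right hML0
    rw [Nat.log_pow (by norm_num : 1 < 2)] at this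
    omega
  have hL2 : 2 ≤ L :=
    le_trans (le_max_of_le_right (le_max_of_le_right (le_max_left _ _))) hLL0
  have hLK2 : K2 ≤ L := le_trans (le_max_of_le_right (le_max_left _ _)) hLL0
  have hLK3 : K3 ≤ L :=
    le_trans (le_max_of_le_right (le_max_of_le_right (le_max_right _ _))) hLL0
  have hLK1 : 2^K1 ≤ L := le_trans (le_max_left _ _) hLL0
  have hLpos : (0:ℝ) < L := by positivity
  have hlogL : 0 < Real.log L := Real.log_pos (by exact_mod_cast hL2)
  -- threshold for good positions
  set τ : ℝ := (1/2 - δ) * (Real.log L / l2) with hτdef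
  have hτ0 : 0 ≤ τ := by
    apply mul_nonneg (by linarith) (by positivity)
  -- bad positions
  set B := (Finset.range L).filter (fun j => (s2 j : ℝ) < τ) with hBdef
  -- bound on B.card
  set m := Nat.log 2 L + 1 with hmdef
  have hLm : L < 2^m := Nat.lt_pow_succ_log_self (by norm_num) L
  have h2m : (2:ℕ)^m ≤ 2*L := by
    rw [hmdef, pow_succ]
    have := Nat.pow_log_le_self 2 (show L ≠ 0 by omega)
    omega
  have hmK1 : K1 ≤ m := by
    have : Nat.log 2 (2^K1) ≤ Nat.log 2 L := Nat.log_mono_right hLK1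
    rw [Nat.log_pow (by norm_num : 1 < 2)] at this
    omega
  have hm1 : (1:ℝ)/(2*δ^3) ≤ m := le_trans hK1 (by exact_mod_cast hmK1)
  have hτm : τ ≤ (1/2 - δ) * m := by
    apply mul_le_mul_of_nonneg_left _ (by linarith)
    rw [div_le_iff₀ hl2]
    have hL2m : (L:ℝ) ≤ (2:ℝ)^m := by exact_mod_cast hLm.le
    calc Real.log L ≤ Real.log ((2:ℝ)^m) := Real.log_le_log (by positivity) hL2m
      _ = m * l2 := by rw [Real.log_pow]
  have hBsub : B ⊆ (Finset.range (2^m)).filter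
      (fun n => (∑ j ∈ Finset.range m, if n.testBit j then (1:ℝ) else 0)
        < (1/2 - δ) * (Finset.range m).card) := by
    intro j hj
    rw [hBdef, Finset.mem_filter, Finset.mem_range] at hj
    obtain ⟨hjL, hjτ⟩ := hj
    have hj2m : j < 2^m := lt_trans hjL hLm
    rw [Finset.mem_filter, Finset.mem_range]
    refine ⟨hj2m, ?_⟩
    rw [Finset.sum_boole, s2_eq_card m j hj2m, Finset.card_range]
    exact lt_of_lt_of_le hjτ hτm
  have hBcard : (B.card : ℝ) ≤ δ * L := by
    have h1 : (B.card : ℝ) ≤ (2:ℝ)^m / (4 * δ^2 * (Finset.range m).card) := by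
      calc (B.card : ℝ) ≤ _ := by exact_mod_cast Finset.card_le_card hBsub
        _ ≤ _ := cheb_count m (Finset.range m) (subset_refl _) δ hδ0
            (by rw [Finset.card_range]; omega)
    rw [Finset.card_range] at h1
    have hm0 : (0:ℝ) < m := by positivity
    have h2 : (2:ℝ)^m / (4 * δ^2 * m) ≤ (2*L) / (2/δ) := by
      apply div_le_div₀ (by positivity) _ (by positivity) _
      · exact_mod_cast h2m
      · rw [div_le_iff₀ hδ0]
        rw [div_le_iff₀ (by positivity : (0:ℝ) < 2*δ^3)] at hm1
        nlinarith [hm1, hLpos]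
    have h3 : (2*(L:ℝ)) / (2/δ) = δ * L := by field_simp
    rw [h3] at h2
    linarith
  -- good positions
  set P := (Finset.range L \ B) \ ({0, 1} : Finset ℕ) with hPdef
  have hPsub : P ⊆ Finset.range L := by
    intro j hj
    rw [hPdef, Finset.mem_sdiff, Finset.mem_sdiff] at hj
    exact hj.1.1
  have hPcard : (1 - 2*δ) * L ≤ (P.card : ℝ) := by
    have hc1 : L ≤ P.card + 2 + B.card := by
      have e1 : (Finset.range L \ B).card = L - B.card := by
        rw [Finset.card_sdiff_of_subset (Finset.filter_subset _ _), Finset.card_range]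
      have e2 : (Finset.range L \ B).card - ({0,1} : Finset ℕ).card ≤ P.card :=
        Finset.le_card_sdiff _ _
      have e3 : ({0,1} : Finset ℕ).card ≤ 2 := by
        apply le_trans (Finset.card_insert_le _ _); simp
      have e4 : B.card ≤ L := by
        have := Finset.card_le_card (Finset.filter_subset (fun j => (s2 j : ℝ) < τ) (Finset.range L))
        rw [Finset.card_range] at this
        rw [hBdef]; exact this
      omega
    have hδL : (2:ℝ) ≤ δ * L := by
      have : (2:ℝ)/δ ≤ K2 := hK2
      have hK2L : (K2:ℝ) ≤ L := by exact_mod_cast hLK2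
      rw [div_le_iff₀ hδ0] at this
      nlinarith
    have : (L:ℝ) ≤ P.card + 2 + B.card := by exact_mod_cast hc1
    linarith
  have hPpos : 0 < P.card := by
    have h0 : (0:ℝ) < (P.card : ℝ) := lt_of_lt_of_le (by nlinarith) hPcard
    exact_mod_cast h0
  -- Chebyshev bad set
  set C := (Finset.range (2^L)).filter
      (fun n => (∑ j ∈ P, if n.testBit j then (1:ℝ) else 0) < (1/2 - δ) * P.card) with hCdef
  have hCcard : (C.card : ℝ) ≤ (2:ℝ)^L / (4 * δ^2 * P.card) :=
    cheb_count L P hPsub δ hδ0 hPpos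
  -- main inclusion
  set A := (Finset.range (2^L)).filter (fun n => n < 4) with hAdef
  have hmain : (Finset.Icc 1 M).filter
      (fun n => (S n : ℝ) <
        (1 / (4 * Real.log 2 ^ 2) - ε) * Real.log n * Real.log (Real.log n)) ⊆ A ∪ C := by
    intro n hn
    rw [Finset.mem_filter, Finset.mem_Icc] at hn
    obtain ⟨⟨hn1, hnM⟩, hnbad⟩ := hn
    have hn2L : n < 2^L := lt_of_le_of_lt hnM hML
    by_cases hn4 : n < 4
    · exact Finset.mem_union_left _ (Finset.mem_filter.mpr ⟨Finset.mem_range.mpr hn2L, hn4⟩)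
    push_neg at hn4
    apply Finset.mem_union_right
    rw [hCdef, Finset.mem_filter, Finset.mem_range]
    refine ⟨hn2L, ?_⟩
    by_contra hX
    push_neg at hX
    -- derive lower bound on S n, contradiction with hnbad
    set Q := P.filter (fun j => n.testBit j) with hQdef
    have hXQ : (∑ j ∈ P, if n.testBit j then (1:ℝ) else 0) = (Q.card : ℝ) := by
      rw [Finset.sum_boole]
    rw [hXQ] at hX
    have hQprop : ∀ j ∈ Q, 2 ≤ j ∧ n.testBit j = true := by
      intro j hj
      rw [hQdef, Finset.mem_filter] at hj
      obtain ⟨hjP, hjb⟩ := hj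
      rw [hPdef, Finset.mem_sdiff] at hjP
      have : j ∉ ({0,1} : Finset ℕ) := hjP.2
      simp only [Finset.mem_insert, Finset.mem_singleton] at this
      exact ⟨by omega, hjb⟩
    have hSn : (∑ j ∈ Q, s2 j : ℕ) ≤ S n := sum_s2_le_S S hS n hn1 Q hQprop
    have hτQ : ∀ j ∈ Q, τ ≤ (s2 j : ℝ) := by
      intro j hj
      rw [hQdef, Finset.mem_filter] at hj
      have hjP := hj.1
      rw [hPdef, Finset.mem_sdiff, Finset.mem_sdiff] at hjP
      have hjB := hjP.1.2
      rw [hBdef, Finset.mem_filter] at hjB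
      push_neg at hjB
      exact hjB (hjP.1.1)
    have hsumQ : (Q.card : ℝ) * τ ≤ ∑ j ∈ Q, (s2 j : ℝ) := by
      have := Finset.card_nsmul_le_sum Q (fun j => (s2 j : ℝ)) τ hτQ
      rwa [nsmul_eq_mul] at this
    have hcast : (∑ j ∈ Q, (s2 j : ℝ)) = ((∑ j ∈ Q, s2 j : ℕ) : ℝ) := by push_cast; rfl
    have hSreal : (Q.card : ℝ) * τ ≤ (S n : ℝ) := by
      rw [hcast] at hsumQ
      calc (Q.card : ℝ) * τ ≤ ((∑ j ∈ Q, s2 j : ℕ) : ℝ) := hsumQ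
        _ ≤ (S n : ℝ) := by exact_mod_cast hSn
    have hlb : (1/2 - δ) * ((1 - 2*δ) * L) * τ ≤ (S n : ℝ) := by
      have h1 : (1/2 - δ) * ((1 - 2*δ) * L) ≤ (1/2 - δ) * (P.card : ℝ) :=
        mul_le_mul_of_nonneg_left hPcard (by linarith)
      have h2 : (1/2 - δ) * (P.card : ℝ) ≤ (Q.card : ℝ) := hX
      calc (1/2 - δ) * ((1 - 2*δ) * L) * τ ≤ (Q.card : ℝ) * τ := by
            apply mul_le_mul_of_nonneg_right _ hτ0
            linarith only [h1, h2]
        _ ≤ (S n : ℝ) := hSreal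
    -- now upper bound the target
    have hn4' : (4:ℝ) ≤ (n:ℝ) := by exact_mod_cast hn4
    have hlogn : 0 < Real.log n := Real.log_pos (by linarith)
    have hlogn1 : 1 < Real.log n := by
      have h4 : Real.log 4 ≤ Real.log n := Real.log_le_log (by norm_num) hn4'
      have h5 : Real.log 4 = 2 * Real.log 2 := by
        rw [show (4:ℝ) = 2^2 by norm_num, Real.log_pow]; push_cast; ring
      have h6 := Real.log_two_gt_d9
      rw [h5] at h4
      linarith only [h4, h6]
    have hloglogn : 0 < Real.log (Real.log n) := Real.log_pos hlogn1
    have hlognL : Real.log n ≤ L * l2 := by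
      have hn2L' : (n:ℝ) ≤ (2:ℝ)^L := by exact_mod_cast hn2L.le
      calc Real.log n ≤ Real.log ((2:ℝ)^L) := Real.log_le_log (by linarith) hn2L'
        _ = L * l2 := by rw [Real.log_pow]
    have hloglognL : Real.log (Real.log n) ≤ Real.log L := by
      apply Real.log_le_log hlogn
      calc Real.log n ≤ L * l2 := hlognL
        _ ≤ L := by
          calc (L:ℝ) * l2 ≤ L * 1 := mul_le_mul_of_nonneg_left hl2'.le hLpos.le
            _ = L := mul_one _
    -- case on sign of (c0 - ε)
    rcases le_or_gt (1 / (4 * l2 ^ 2) - ε) 0 with hsign | hsign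
    · have : (1 / (4 * l2 ^ 2) - ε) * Real.log n * Real.log (Real.log n) ≤ 0 := by
        apply mul_nonpos_of_nonpos_of_nonneg _ hloglogn.le
        exact mul_nonpos_of_nonpos_of_nonneg hsign hlogn.le
      have hS0' : (0:ℝ) ≤ (S n : ℝ) := by positivity
      linarith only [hnbad, this, hS0']
    · set t := 1 / (4 * l2 ^ 2) - ε with htdef
      have key : t * l2^2 ≤ (1/2 - δ)^2 * (1 - 2*δ) := by
        have hc0 : (1 / (4 * l2 ^ 2)) * l2^2 = 1/4 := by
          rw [hl2def]; field_simp
        have : t * l2^2 = 1/4 - ε * l2^2 := by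
          rw [htdef]; rw [sub_mul, hc0]
        rw [this]
        nlinarith only [hδ0, hδ8, hδε, sq_nonneg δ,
          mul_le_mul_of_nonneg_left hδ8 (sq_nonneg δ)]
      have h1 : t ≤ (1/2 - δ)^2 * (1 - 2*δ) / l2^2 := by
        rw [le_div_iff₀ (by positivity)]
        exact key
      have hub : t * Real.log n * Real.log (Real.log n) ≤ t * (L * l2) * Real.log L := by
        have s1 : t * Real.log n * Real.log (Real.log n) ≤ t * (L * l2) * Real.log (Real.log n) := by
          apply mul_le_mul_of_nonneg_right _ hloglogn.le
          exact mul_le_mul_of_nonneg_left hlognL hsign.le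
        have s2' : t * (L * l2) * Real.log (Real.log n) ≤ t * (L * l2) * Real.log L := by
          apply mul_le_mul_of_nonneg_left hloglognL
          have : (0:ℝ) ≤ L * l2 := by positivity
          exact mul_nonneg hsign.le this
        linarith only [s1, s2']
      have heq : (1/2 - δ)^2 * (1 - 2*δ) / l2^2 * (L * l2) * Real.log L
          = (1/2 - δ) * ((1 - 2*δ) * L) * τ := by
        rw [hτdef]; field_simp
      have hub2 : t * (L * l2) * Real.log L
          ≤ (1/2 - δ)^2 * (1 - 2*δ) / l2^2 * (L * l2) * Real.log L := by
        apply mul_le_mul_of_nonneg_right _ hlogL.le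
        apply mul_le_mul_of_nonneg_right h1 (by positivity)
      rw [heq] at hub2
      exact lt_irrefl _ (lt_of_lt_of_le hnbad (le_trans hub (le_trans hub2 hlb)))
  -- final counting
  have hAcard : A.card ≤ 4 := by
    have : A ⊆ Finset.range 4 := by
      intro j hj
      rw [hAdef, Finset.mem_filter] at hj
      exact Finset.mem_range.mpr hj.2
    calc A.card ≤ (Finset.range 4).card := Finset.card_le_card this
      _ = 4 := Finset.card_range 4
  have hcnt2 : ((((Finset.Icc 1 M).filter
      (fun n => (S n : ℝ) <
        (1 / (4 * Real.log 2 ^ 2) - ε) * Real.log n * Real.log (Real.log n))).card : ℕ) : ℝ)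
      ≤ (A.card : ℝ) + (C.card : ℝ) := by
    have h1 := Finset.card_le_card hmain
    have h2 := Finset.card_union_le A C
    exact_mod_cast le_trans h1 h2
  have hterm : (2:ℝ)^L / (4 * δ^2 * P.card) ≤ c/4 * x := by
    have hden : 8/c ≤ 4 * δ^2 * (P.card : ℝ) := by
      have hK3L : (K3:ℝ) ≤ L := by exact_mod_cast hLK3
      have hK3' : 2/(δ^2*(1-2*δ)*c) ≤ (K3:ℝ) := hK3
      have hpos : (0:ℝ) < δ^2*(1-2*δ)*c := by
        apply mul_pos (mul_pos (by positivity) (by linarith)) hc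
      rw [div_le_iff₀ hpos] at hK3'
      have h5 : (1-2*δ) * L ≤ (P.card : ℝ) := hPcard
      rw [div_le_iff₀ hc]
      have hd2 : (0:ℝ) ≤ δ^2 := sq_nonneg δ
      have a2 : δ^2 * ((1-2*δ) * K3) ≤ δ^2 * ((1-2*δ) * L) := by
        apply mul_le_mul_of_nonneg_left _ hd2
        exact mul_le_mul_of_nonneg_left hK3L (by linarith)
      have a3 : δ^2 * ((1-2*δ) * L) ≤ δ^2 * (P.card : ℝ) :=
        mul_le_mul_of_nonneg_left h5 hd2
      have a4 : δ^2 * ((1-2*δ) * K3) * c ≤ δ^2 * (P.card : ℝ) * c :=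
        mul_le_mul_of_nonneg_right (le_trans a2 a3) hc.le
      have a5 : (2:ℝ) ≤ δ^2 * ((1-2*δ) * K3) * c := by
        calc (2:ℝ) ≤ (K3:ℝ) * (δ^2 * (1-2*δ) * c) := hK3'
          _ = δ^2 * ((1-2*δ) * K3) * c := by ring
      linarith
    have h8c : (0:ℝ) < 8/c := by positivity
    calc (2:ℝ)^L / (4 * δ^2 * P.card) ≤ (2*x) / (8/c) :=
        div_le_div₀ (by linarith) h2L h8c hden
      _ = c/4 * x := by field_simp; ring
  -- conclude
  rw [Real.norm_eq_abs, Real.norm_eq_abs, abs_of_nonneg (Nat.cast_nonneg _),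
    abs_of_nonneg hx0]
  have hA4 : (A.card : ℝ) ≤ 4 := by exact_mod_cast hAcard
  have hC : (C.card : ℝ) ≤ c/4 * x := le_trans hCcard hterm
  have h4cx : (4:ℝ) ≤ c/2 * x := by
    rw [div_le_iff₀ hc] at hxc
    linarith only [hxc]
  linarith only [hcnt2, hA4, hC, h4cx]
end

section
/- Let t(n) denote the number of occurrences of the symbol 2 in the second canonical form of n (with each (1+1) abbreviated as 2). Then n ≥ 2^{t(n)} for every integer n ≥ 2; equivalently t(n) ≤ log n / log 2. -/
/-- Let `t n` be the number of occurrences of the symbol `2` (i.e. of `(1+1)`)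
in the second canonical form of `n`, specified by its recursion: `t 2 = 1`;
for an odd prime `p` with `p - 1 = 2^s · m` (`m` odd),
`t p = 1 + t s + t m` (the terms `t s`, `t m` appearing only when `s ≥ 2`,
resp. `m ≥ 2`); and for composite `n = p₁⋯p_k q₁^{b₁}⋯q_h^{b_h}` (`b_j ≥ 2`),
`t n = ∑ t(pᵢ) + ∑ (t(qⱼ) + t(bⱼ))`. Then `n ≥ 2^{t n}` for every `n ≥ 2`;
equivalently `t n ≤ log n / log 2`. -/
theorem stmt14 (t : ℕ → ℕ) (ht2 : t 2 = 1)
    (htp : ∀ p : ℕ, p.Prime → p % 2 = 1 →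
      t p = 1
        + (if 2 ≤ (p - 1).factorization 2 then t ((p - 1).factorization 2) else 0)
        + (if 2 ≤ (p - 1) / 2 ^ ((p - 1).factorization 2) then
            t ((p - 1) / 2 ^ ((p - 1).factorization 2)) else 0))
    (htc : ∀ n : ℕ, 2 ≤ n → ¬ n.Prime →
      t n = ∑ p ∈ n.primeFactors,
        (t p + if 2 ≤ n.factorization p then t (n.factorization p) else 0)) :
    ∀ n : ℕ, 2 ≤ n → 2 ^ t n ≤ n := by
  intro n
  induction n using Nat.strong_induction_on with
  | _ n IH =>
    intro hn
    by_cases hp : n.Prime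
    · by_cases h2 : n = 2
      · subst h2; rw [ht2]; norm_num
      · have hodd : n % 2 = 1 := Nat.odd_iff.mp (hp.odd_of_ne_two h2)
        set s := (n - 1).factorization 2 with hs
        set m := (n - 1) / 2 ^ s with hmdef
        have hn1 : 0 < n - 1 := by omega
        have hdvd : 2 ∣ n - 1 := by omega
        have hs1 : 1 ≤ s :=
          Nat.Prime.factorization_pos_of_dvd Nat.prime_two (by omega) hdvd
        have hsplit : 2 ^ s * m = n - 1 := Nat.ordProj_mul_ordCompl_eq_self (n - 1) 2
        have hpow_dvd : 2 ^ s ∣ n - 1 := Nat.ordProj_dvd (n - 1) 2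
        have hpow_le : 2 ^ s ≤ n - 1 := Nat.le_of_dvd hn1 hpow_dvd
        have hslt : s < n := by
          have := Nat.lt_two_pow_self (n := s)
          omega
        have hm1 : 1 ≤ m := Nat.ordCompl_pos 2 (by omega)
        have hmlt : m < n := by
          have : m ≤ n - 1 := Nat.div_le_self _ _
          have h2s : 2 ≤ 2 ^ s := by
            calc 2 = 2 ^ 1 := rfl
            _ ≤ 2 ^ s := Nat.pow_le_pow_right (by norm_num) hs1
          omega
        have hA : 2 ^ (if 2 ≤ s then t s else 0) ≤ 2 ^ (s - 1) := by
          split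
          · next h =>
            have h1 : 2 ^ t s ≤ s := IH s hslt h
            have h2 : s ≤ 2 ^ (s - 1) := by
              have := Nat.lt_two_pow_self (n := (s - 1))
              have hs' : s = (s - 1) + 1 := by omega
              omega
            omega
          · next h =>
            have : s = 1 := by omega
            simp [this]
        have hB : 2 ^ (if 2 ≤ m then t m else 0) ≤ m := by
          split
          · exact IH m hmlt ‹2 ≤ m›
          · simp; omega
        rw [htp n hp hodd]
        rw [pow_add, pow_add, pow_one]
        calc 2 * 2 ^ (if 2 ≤ s then t s else 0) * 2 ^ (if 2 ≤ m then t m else 0)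
            ≤ 2 * 2 ^ (s - 1) * m := by
              exact Nat.mul_le_mul (Nat.mul_le_mul_left 2 hA) hB
          _ = 2 ^ s * m := by
              have : 2 * 2 ^ (s - 1) = 2 ^ s := by
                rw [← pow_succ']
                congr 1
                omega
              rw [this]
          _ = n - 1 := hsplit
          _ ≤ n := by omega
    · rw [htc n hn hp, ← Finset.prod_pow_eq_pow_sum]
      calc ∏ p ∈ n.primeFactors,
            2 ^ (t p + if 2 ≤ n.factorization p then t (n.factorization p) else 0)
          ≤ ∏ p ∈ n.primeFactors, p ^ n.factorization p := by
            apply Finset.prod_le_prod'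
            intro p hpmem
            have hpp : p.Prime := Nat.prime_of_mem_primeFactors hpmem
            have hpdvd : p ∣ n := Nat.dvd_of_mem_primeFactors hpmem
            have hple : p ≤ n := Nat.le_of_dvd (by omega) hpdvd
            have hplt : p < n := by
              rcases lt_or_eq_of_le hple with h | h
              · exact h
              · exact absurd (h ▸ hpp) hp
            set b := n.factorization p with hb
            have hb1 : 1 ≤ b :=
              Nat.Prime.factorization_pos_of_dvd hpp (by omega) hpdvd
            have hpb_dvd : p ^ b ∣ n := Nat.ordProj_dvd n p
            have hpb_le : p ^ b ≤ n := Nat.le_of_dvd (by omega) hpb_dvd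
            have hblt : b < n := by
              have h1 : 2 ^ b ≤ p ^ b := Nat.pow_le_pow_left hpp.two_le b
              have := Nat.lt_two_pow_self (n := b)
              omega
            have htp' : 2 ^ t p ≤ p := IH p hplt hpp.two_le
            have hAle : 2 ^ (if 2 ≤ b then t b else 0) ≤ p ^ (b - 1) := by
              split
              · next h =>
                have h1 : 2 ^ t b ≤ b := IH b hblt h
                have h2 : b ≤ 2 ^ (b - 1) := by
                  have := Nat.lt_two_pow_self (n := (b - 1))
                  omega
                have h3 : 2 ^ (b - 1) ≤ p ^ (b - 1) :=
                  Nat.pow_le_pow_left hpp.two_le _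
                omega
              · next h =>
                  have hb' : b = 1 := by omega
                  simp [hb']
            calc 2 ^ (t p + if 2 ≤ b then t b else 0)
                = 2 ^ t p * 2 ^ (if 2 ≤ b then t b else 0) := pow_add 2 _ _
              _ ≤ p * p ^ (b - 1) := Nat.mul_le_mul htp' hAle
              _ = p ^ b := by
                  rw [← pow_succ']
                  congr 1
                  omega
        _ = n := Nat.factorization_prod_pow_eq_self (by omega)
end

section
/- For every integer n ≥ 2, the length S_SCF(n) of the second canonical form encoding of n satisfies S_SCF(n) ≤ 6·(log n / log 2). In fact S_SCF(n) ≤ 6 t(n) − 1 where t(n) is the number of 2's in the encoding and t(n) ≤ log n / log 2. -/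
/-- Let `t n` be the number of occurrences of the symbol `2` (i.e. of `(1+1)`)
and `S n` the length (number of symbols `1`, `+`, `×`, `∧`) of the second
canonical form of `n`, both specified by their defining recursions:
`t 2 = 1`, `S 2 = 3`; for an odd prime `p` with `p - 1 = 2^s · m` (`m` odd),
`t p = 1 + t s + t m` and `S p = 5 + (1 + S s) + (1 + S m)`, where the terms
for `s` (resp. `m`) appear only when `s ≥ 2` (resp. `m ≥ 2`); for composite
`n = p₁⋯p_k q₁^{b₁}⋯q_h^{b_h}` (`b_j ≥ 2`),
`t n = ∑ t(pᵢ) + ∑ (t(qⱼ) + t(bⱼ))` and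
`S n = k + 2h - 1 + ∑ S(pᵢ) + ∑ (S(qⱼ) + S(bⱼ))`.
Then for all `n ≥ 2`: `S n ≤ 6 t n - 1`, `t n ≤ log n / log 2` (i.e.
`2^{t n} ≤ n`), and consequently `S n ≤ 6 log n / log 2`. -/
theorem stmt16 (t S : ℕ → ℕ) (ht2 : t 2 = 1) (hS2 : S 2 = 3)
    (htp : ∀ p : ℕ, p.Prime → p % 2 = 1 →
      t p = 1
        + (if 2 ≤ (p - 1).factorization 2 then t ((p - 1).factorization 2) else 0)
        + (if 2 ≤ (p - 1) / 2 ^ ((p - 1).factorization 2) then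
            t ((p - 1) / 2 ^ ((p - 1).factorization 2)) else 0))
    (hSp : ∀ p : ℕ, p.Prime → p % 2 = 1 →
      S p = 5
        + (if 2 ≤ (p - 1).factorization 2 then 1 + S ((p - 1).factorization 2) else 0)
        + (if 2 ≤ (p - 1) / 2 ^ ((p - 1).factorization 2) then
            1 + S ((p - 1) / 2 ^ ((p - 1).factorization 2)) else 0))
    (htc : ∀ n : ℕ, 2 ≤ n → ¬ n.Prime →
      t n = ∑ p ∈ n.primeFactors,
        (t p + if 2 ≤ n.factorization p then t (n.factorization p) else 0))
    (hSc : ∀ n : ℕ, 2 ≤ n → ¬ n.Prime →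
      S n = (∑ p ∈ n.primeFactors,
        ((if 2 ≤ n.factorization p then 2 else 1) + S p
          + if 2 ≤ n.factorization p then S (n.factorization p) else 0)) - 1) :
    ∀ n : ℕ, 2 ≤ n →
      S n ≤ 6 * t n - 1 ∧ 2 ^ t n ≤ n ∧
        (S n : ℝ) ≤ 6 * Real.log n / Real.log 2 := by
  have twomul : ∀ s : ℕ, 1 ≤ s → 2 * s ≤ 2 ^ s := by
    intro s hs
    induction s with
    | zero => omega
    | succ n ih =>
      rcases Nat.eq_or_lt_of_le hs with h | h
      · simp [← h]
      · have h1 : 1 ≤ n := by omega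
        have := ih h1
        have h2 : 2 ≤ 2 ^ n := by
          calc 2 = 2 ^ 1 := rfl
          _ ≤ 2 ^ n := Nat.pow_le_pow_right (by norm_num) h1
        calc 2 * (n + 1) = 2 * n + 2 := by ring
        _ ≤ 2 ^ n + 2 ^ n := by omega
        _ = 2 ^ (n + 1) := by ring
  have key : ∀ n : ℕ, 2 ≤ n → 1 ≤ t n ∧ S n ≤ 6 * t n - 1 ∧ 2 ^ t n ≤ n := by
    intro n
    induction n using Nat.strong_induction_on with
    | _ n IH =>
      intro hn
      by_cases hp : n.Prime
      · by_cases h2 : n = 2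
        · subst h2; simp [ht2, hS2]
        · -- odd prime
          have hodd : n % 2 = 1 := by
            rcases hp.eq_two_or_odd with h | h
            · exact absurd h h2
            · exact h
          have hn3 : 3 ≤ n := by
            have := hp.two_le
            omega
          set s := (n - 1).factorization 2 with hs
          set m := (n - 1) / 2 ^ s with hm
          have hne : n - 1 ≠ 0 := by omega
          have hdvd : 2 ∣ n - 1 := by omega
          have hs1 : 1 ≤ s :=
            Nat.Prime.factorization_pos_of_dvd Nat.prime_two hne hdvd
          have hm1 : 1 ≤ m := Nat.ordCompl_pos 2 hne
          have heq : 2 ^ s * m = n - 1 := Nat.ordProj_mul_ordCompl_eq_self (n - 1) 2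
          have hslt : s < n := by
            have := Nat.factorization_lt (p := 2) hne
            omega
          have hmlt : m < n := by
            have : m ≤ n - 1 := Nat.div_le_self _ _
            omega
          -- bounds for the pieces
          have hA : 2 ^ (if 2 ≤ s then t s else 0) ≤ s ∧
              (if 2 ≤ s then 1 + S s else 0) ≤ 6 * (if 2 ≤ s then t s else 0) := by
            by_cases h : 2 ≤ s
            · obtain ⟨h1, h2', h3⟩ := IH s hslt h
              simp only [if_pos h]
              exact ⟨h3, by omega⟩
            · simp only [if_neg h]
              omega
          have hB : 2 ^ (if 2 ≤ m then t m else 0) ≤ m ∧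
              (if 2 ≤ m then 1 + S m else 0) ≤ 6 * (if 2 ≤ m then t m else 0) := by
            by_cases h : 2 ≤ m
            · obtain ⟨h1, h2', h3⟩ := IH m hmlt h
              simp only [if_pos h]
              exact ⟨h3, by omega⟩
            · simp only [if_neg h]
              omega
          have htn := htp n hp hodd
          have hSn := hSp n hp hodd
          rw [← hs, ← hm] at htn hSn
          refine ⟨by omega, by omega, ?_⟩
          rw [htn]
          have hpow : 2 ^ (1 + (if 2 ≤ s then t s else 0) + (if 2 ≤ m then t m else 0))
              = 2 * (2 ^ (if 2 ≤ s then t s else 0) * 2 ^ (if 2 ≤ m then t m else 0)) := by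
            rw [pow_add, pow_add, pow_one]; ring
          rw [hpow]
          have h2s : 2 * s ≤ 2 ^ s := twomul s hs1
          calc 2 * (2 ^ (if 2 ≤ s then t s else 0) * 2 ^ (if 2 ≤ m then t m else 0))
              ≤ 2 * (s * m) := by
                have := hA.1; have := hB.1
                exact Nat.mul_le_mul_left 2 (Nat.mul_le_mul hA.1 hB.1)
            _ = (2 * s) * m := by ring
            _ ≤ 2 ^ s * m := Nat.mul_le_mul_right m h2s
            _ = n - 1 := heq
            _ ≤ n := by omega
      · -- composite
        have hne : n ≠ 0 := by omega
        have hFne : n.primeFactors.Nonempty := Nat.nonempty_primeFactors.mpr (by omega)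
        -- per-prime facts
        have hfacts : ∀ p ∈ n.primeFactors,
            1 ≤ t p ∧
            2 ^ (t p + if 2 ≤ n.factorization p then t (n.factorization p) else 0)
              ≤ p ^ n.factorization p ∧
            ((if 2 ≤ n.factorization p then 2 else 1) + S p
              + (if 2 ≤ n.factorization p then S (n.factorization p) else 0))
              ≤ 6 * (t p + if 2 ≤ n.factorization p then t (n.factorization p) else 0) := by
          intro p hpF
          obtain ⟨hpp, hpd, -⟩ := Nat.mem_primeFactors.mp hpF
          have hplt : p < n := by
            rcases Nat.lt_or_ge p n with h | h
            · exact h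
            · have : p = n := le_antisymm (Nat.le_of_dvd (by omega) hpd) h
              exact absurd (this ▸ hpp) hp
          obtain ⟨htp1, hSpb, hpowp⟩ := IH p hplt hpp.two_le
          set a := n.factorization p with ha
          have ha1 : 1 ≤ a := hpp.factorization_pos_of_dvd hne hpd
          by_cases h : 2 ≤ a
          · have halt : a < n := by
              have h1 : p ^ a ≤ n := Nat.ordProj_le p hne
              have h2 : 2 ^ a ≤ p ^ a := Nat.pow_le_pow_left hpp.two_le a
              have h3 : a < 2 ^ a := Nat.lt_two_pow_self
              omega
            obtain ⟨hta1, hSab, hpowa⟩ := IH a halt h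
            simp only [if_pos h]
            refine ⟨htp1, ?_, by omega⟩
            have hstep : a ≤ p ^ (a - 1) := by
              have h1 : a - 1 < 2 ^ (a - 1) := Nat.lt_two_pow_self
              have h2 : 2 ^ (a - 1) ≤ p ^ (a - 1) := Nat.pow_le_pow_left hpp.two_le _
              omega
            calc 2 ^ (t p + t a) = 2 ^ t p * 2 ^ t a := pow_add 2 _ _
              _ ≤ p * a := Nat.mul_le_mul hpowp hpowa
              _ ≤ p * p ^ (a - 1) := Nat.mul_le_mul_left p hstep
              _ = p ^ a := by
                  rw [← pow_succ']
                  congr 1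
                  omega
          · have ha' : a = 1 := by omega
            simp only [ha']
            norm_num
            refine ⟨htp1, ?_, by omega⟩
            simpa using hpowp
        have htn := htc n hn hp
        have hSn := hSc n hn hp
        constructor
        · -- 1 ≤ t n
          obtain ⟨p, hpF⟩ := hFne
          have h1 := (hfacts p hpF).1
          have : t p + (if 2 ≤ n.factorization p then t (n.factorization p) else 0)
              ≤ ∑ q ∈ n.primeFactors,
                (t q + if 2 ≤ n.factorization q then t (n.factorization q) else 0) :=
            Finset.single_le_sum (f := fun q => t q + if 2 ≤ n.factorization q then t (n.factorization q) else 0)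
              (fun _ _ => Nat.zero_le _) hpF
          omega
        constructor
        · -- S n ≤ 6 * t n - 1
          rw [hSn, htn, Finset.mul_sum]
          exact Nat.sub_le_sub_right
            (Finset.sum_le_sum fun p hpF => (hfacts p hpF).2.2) 1
        · -- 2 ^ t n ≤ n
          rw [htn, ← Finset.prod_pow_eq_pow_sum]
          calc ∏ p ∈ n.primeFactors,
                2 ^ (t p + if 2 ≤ n.factorization p then t (n.factorization p) else 0)
              ≤ ∏ p ∈ n.primeFactors, p ^ n.factorization p :=
                Finset.prod_le_prod' fun p hpF => (hfacts p hpF).2.1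
            _ = n := by
                rw [← Nat.support_factorization]
                exact Nat.factorization_prod_pow_eq_self hne
  intro n hn
  obtain ⟨ht1, hSb, hpow⟩ := key n hn
  refine ⟨hSb, hpow, ?_⟩
  have hlog2 : (0:ℝ) < Real.log 2 := Real.log_pos (by norm_num)
  have hcast : ((2:ℝ)) ^ t n ≤ (n:ℝ) := by exact_mod_cast hpow
  have hlogle : (t n : ℝ) * Real.log 2 ≤ Real.log n := by
    have := Real.log_le_log (by positivity) hcast
    rwa [Real.log_pow] at this
  have hS6 : (S n : ℝ) ≤ 6 * (t n : ℝ) := by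
    have : S n ≤ 6 * t n := by omega
    exact_mod_cast this
  calc (S n : ℝ) ≤ 6 * (t n : ℝ) := hS6
    _ ≤ 6 * (Real.log n / Real.log 2) := by
        apply mul_le_mul_of_nonneg_left _ (by norm_num)
        rw [le_div_iff₀ hlog2]
        exact hlogle
    _ = 6 * Real.log n / Real.log 2 := by ring
end

section
/- For every k ≥ 1 and every k-trace (p, ℓ, r), the number f_{(p,ℓ,r)}(n) of arithmetic formulas for n with trace (p,ℓ,r) satisfies f_{(p,ℓ,r)}(n) = Σ_{n₁+⋯+n_p+m = n+p} binom(m,p) f₀(m) Π_{i=1}^p (f_{ℓᵢ} *' f_{rᵢ})(nᵢ), where the sum is over positive integers n₁,…,n_p, m. -/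
/-- The number of multiplicative nodes of a formula. -/
def Formula.mulCount : Formula → ℕ
  | .one => 0
  | .add a b => a.mulCount + b.mulCount
  | .mul a b => a.mulCount + b.mulCount + 1

/-- The list, from left to right, of pairs `(ℓᵢ, rᵢ)` where `ℓᵢ` (resp. `rᵢ`)
is the number of multiplicative nodes in the left (resp. right) subtree of the
`i`-th primitive multiplicative node (a multiplicative node with no
multiplicative ancestor). This encodes the trace `(p, ℓ, r)` of the formula,
with `p` the length of the list. -/
def Formula.primTraces : Formula → List (ℕ × ℕ)
  | .one => []
  | .add a b => a.primTraces ++ b.primTraces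
  | .mul a b => [(a.mulCount, b.mulCount)]

/-- `fMul k n` is the number of arithmetic formulas for `n` with exactly `k`
multiplicative nodes. -/
noncomputable def fMul (k n : ℕ) : ℕ :=
  {A : Formula | A.Valid ∧ A.val = n ∧ A.mulCount = k}.ncard

/-- `fTrace n L` is the number of arithmetic formulas for `n` with trace `L`. -/
noncomputable def fTrace (n : ℕ) (L : List (ℕ × ℕ)) : ℕ :=
  {A : Formula | A.Valid ∧ A.val = n ∧ A.primTraces = L}.ncard

/-- Proper Dirichlet convolution. -/
def dconv (g h : ℕ → ℕ) (n : ℕ) : ℕ :=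
  ∑ d ∈ n.properDivisors.filter (1 < ·), g d * h (n / d)

-- ## auxiliary part

deriving instance DecidableEq for Formula

open Finset

namespace Stmt18

lemma val_pos (A : Formula) : 0 < A.val := by
  induction A with
  | one => simp [Formula.val]
  | add a b ha hb => simp only [Formula.val]; omega
  | mul a b ha hb => simpa [Formula.val] using Nat.mul_pos ha hb

lemma finite_T : ∀ n : ℕ, {A : Formula | A.Valid ∧ A.val = n}.Finite := by
  intro n
  induction n using Nat.strong_induction_on with
  | _ n ih =>
    classical
    set U : Set Formula := ⋃ m ∈ Set.Iio n, {A : Formula | A.Valid ∧ A.val = m} with hU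
    have hUfin : U.Finite := Set.Finite.biUnion (Set.finite_Iio n) (fun m hm => ih m hm)
    have hsub : {A : Formula | A.Valid ∧ A.val = n} ⊆
        insert Formula.one
          (((fun p : Formula × Formula => Formula.add p.1 p.2) '' (U ×ˢ U)) ∪
           ((fun p : Formula × Formula => Formula.mul p.1 p.2) '' (U ×ˢ U))) := by
      rintro A ⟨hv, hval⟩
      cases A with
      | one => exact Set.mem_insert _ _
      | add a b =>
        refine Set.mem_insert_of_mem _ (Or.inl ⟨(a, b), ?_, rfl⟩)
        have hva := val_pos a; have hvb := val_pos b
        have : a.val + b.val = n := hval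
        constructor
        · exact Set.mem_biUnion (show a.val ∈ Set.Iio n by simp; omega) ⟨hv.1, rfl⟩
        · exact Set.mem_biUnion (show b.val ∈ Set.Iio n by simp; omega) ⟨hv.2, rfl⟩
      | mul a b =>
        refine Set.mem_insert_of_mem _ (Or.inr ⟨(a, b), ?_, rfl⟩)
        obtain ⟨ha, hb, ha2, hb2⟩ := hv
        have : a.val * b.val = n := hval
        have h1 : a.val < n := by nlinarith [val_pos a, val_pos b]
        have h2 : b.val < n := by nlinarith [val_pos a, val_pos b]
        exact ⟨Set.mem_biUnion (show a.val ∈ Set.Iio n by simpa) ⟨ha, rfl⟩,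
               Set.mem_biUnion (show b.val ∈ Set.Iio n by simpa) ⟨hb, rfl⟩⟩
    exact Set.Finite.subset (Set.Finite.insert _ (((hUfin.prod hUfin).image _).union
      ((hUfin.prod hUfin).image _))) hsub

lemma finite_Tt (n : ℕ) (L : List (ℕ × ℕ)) :
    {A : Formula | A.Valid ∧ A.val = n ∧ A.primTraces = L}.Finite :=
  (finite_T n).subset (fun A h => ⟨h.1, h.2.1⟩)

lemma finite_Tm (k n : ℕ) :
    {A : Formula | A.Valid ∧ A.val = n ∧ A.mulCount = k}.Finite :=
  (finite_T n).subset (fun A h => ⟨h.1, h.2.1⟩)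

noncomputable def TF (n : ℕ) (L : List (ℕ × ℕ)) : Finset Formula := (finite_Tt n L).toFinset

noncomputable def MF (k n : ℕ) : Finset Formula := (finite_Tm k n).toFinset

lemma mem_TF {A : Formula} {n L} : A ∈ TF n L ↔ A.Valid ∧ A.val = n ∧ A.primTraces = L :=
  Set.Finite.mem_toFinset _

lemma mem_MF {A : Formula} {k n} : A ∈ MF k n ↔ A.Valid ∧ A.val = n ∧ A.mulCount = k :=
  Set.Finite.mem_toFinset _

lemma fTrace_eq (n L) : fTrace n L = (TF n L).card := by
  rw [fTrace, Set.ncard_eq_toFinset_card _ (finite_Tt n L)]; rfl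

lemma fMul_eq (k n) : fMul k n = (MF k n).card := by
  rw [fMul, Set.ncard_eq_toFinset_card _ (finite_Tm k n)]; rfl

lemma fTrace_zero (L) : fTrace 0 L = 0 := by
  rw [fTrace_eq]
  convert Finset.card_empty
  ext A; simp only [mem_TF, Finset.notMem_empty, iff_false]
  rintro ⟨-, h, -⟩; exact absurd h (by have := val_pos A; omega)

lemma fMul_zero_right (k) : fMul k 0 = 0 := by
  rw [fMul_eq]
  convert Finset.card_empty
  ext A; simp only [mem_MF, Finset.notMem_empty, iff_false]
  rintro ⟨-, h, -⟩; exact absurd h (by have := val_pos A; omega)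

lemma val_eq_one {A : Formula} (hv : A.Valid) (h : A.val = 1) : A = Formula.one := by
  cases A with
  | one => rfl
  | add a b => exact absurd h (by have := val_pos a; have := val_pos b; simp [Formula.val]; omega)
  | mul a b =>
    obtain ⟨-, -, h2, h3⟩ := hv
    exact absurd h (by simp only [Formula.val]; nlinarith)

lemma fMul_zero_one : fMul 0 1 = 1 := by
  rw [fMul_eq]
  convert Finset.card_singleton Formula.one
  ext A
  simp only [mem_MF, Finset.mem_singleton]
  constructor
  · rintro ⟨hv, h1, -⟩; exact val_eq_one hv h1
  · rintro rfl; exact ⟨trivial, rfl, rfl⟩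

lemma primSum (A : Formula) : (A.primTraces.map fun x => x.1 + x.2 + 1).sum = A.mulCount := by
  induction A with
  | one => rfl
  | add a b ha hb => simp [Formula.primTraces, Formula.mulCount, ha, hb]
  | mul a b ha hb => simp [Formula.primTraces, Formula.mulCount]

lemma primTraces_nil_iff (A : Formula) : A.primTraces = [] ↔ A.mulCount = 0 := by
  constructor
  · intro h; rw [← primSum, h]; rfl
  · intro h
    rcases hpt : A.primTraces with _ | ⟨x, l⟩
    · rfl
    · exfalso
      have := primSum A
      rw [hpt, h] at this
      simp at this

lemma TF_nil (n : ℕ) : TF n [] = MF 0 n := by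
  ext A; simp [mem_TF, mem_MF, primTraces_nil_iff]

lemma fTrace_nil (n : ℕ) : fTrace n [] = fMul 0 n := by
  rw [fTrace_eq, fMul_eq, TF_nil]

end Stmt18

namespace Stmt18

open Finset

/-- possible (left,right) pairs at an addition root -/
noncomputable def addF (n : ℕ) (L : List (ℕ × ℕ)) : Finset (Formula × Formula) :=
  (Finset.range (L.length + 1) ×ˢ Finset.HasAntidiagonal.antidiagonal n).biUnion
    fun q => TF q.2.1 (L.take q.1) ×ˢ TF q.2.2 (L.drop q.1)

/-- possible (left,right) pairs at a multiplication root -/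
noncomputable def mulF (L : List (ℕ × ℕ)) (n : ℕ) : Finset (Formula × Formula) :=
  match L with
  | [(l, r)] => (n.properDivisors.filter (1 < ·)).biUnion fun d => MF l d ×ˢ MF r (n / d)
  | _ => ∅

noncomputable def mulTerm (L : List (ℕ × ℕ)) (n : ℕ) : ℕ :=
  match L with
  | [(l, r)] => dconv (fMul l) (fMul r) n
  | _ => 0

lemma mem_addF {a b : Formula} {n L} :
    (a, b) ∈ addF n L ↔
      a.Valid ∧ b.Valid ∧ a.val + b.val = n ∧ a.primTraces ++ b.primTraces = L := by
  simp only [addF, Finset.mem_biUnion, Finset.mem_product, Finset.mem_range,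
    Finset.HasAntidiagonal.mem_antidiagonal, mem_TF]
  constructor
  · rintro ⟨⟨i, x⟩, ⟨hi, hx⟩, ⟨hav, hv1, hp1⟩, ⟨hbv, hv2, hp2⟩⟩
    refine ⟨hav, hbv, by omega, ?_⟩
    rw [hp1, hp2, List.take_append_drop]
  · rintro ⟨hav, hbv, hn, hL⟩
    refine ⟨(a.primTraces.length, (a.val, b.val)), ⟨?_, hn⟩, ⟨hav, rfl, ?_⟩, ⟨hbv, rfl, ?_⟩⟩
    · have : a.primTraces.length ≤ L.length := by
        rw [← hL]; simp
      omega
    · rw [← hL, List.take_left]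
    · rw [← hL, List.drop_left]

lemma mem_mulF {a b : Formula} {n : ℕ} {L : List (ℕ × ℕ)} :
    (a, b) ∈ mulF L n ↔
      a.Valid ∧ b.Valid ∧ 2 ≤ a.val ∧ 2 ≤ b.val ∧ a.val * b.val = n ∧
        L = [(a.mulCount, b.mulCount)] := by
  match L with
  | [] => simp [mulF]
  | (l, r) :: (y :: t) => simp [mulF]
  | [(l, r)] =>
    constructor
    · intro h
      rw [mulF, Finset.mem_biUnion] at h
      obtain ⟨d, hd, hmem⟩ := h
      rw [Finset.mem_product] at hmem
      obtain ⟨ha, hb⟩ := hmem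
      rw [mem_MF] at ha hb
      obtain ⟨hav, haval, hamc⟩ := ha
      obtain ⟨hbv, hbval, hbmc⟩ := hb
      rw [Finset.mem_filter, Nat.mem_properDivisors] at hd
      obtain ⟨⟨hdvd, hdlt⟩, hd1⟩ := hd
      have hval : a.val * b.val = n := by rw [haval, hbval, Nat.mul_div_cancel' hdvd]
      have hb2 : 2 ≤ b.val := by
        rw [hbval]
        obtain ⟨t, ht⟩ := hdvd
        have hd0 : 0 < d := by omega
        subst ht
        have h2t : 2 ≤ t := by
          rcases t with _ | _ | t
          · simp at hdlt
          · simp at hdlt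
          · omega
        rw [Nat.mul_div_cancel_left _ hd0]
        exact h2t
      exact ⟨hav, hbv, by rw [haval]; omega, hb2, hval, by rw [hamc, hbmc]⟩
    · rintro ⟨hav, hbv, ha2, hb2, hval, hL⟩
      have hl : l = a.mulCount ∧ r = b.mulCount := by
        injection hL with h1 h2
        injection h1 with h3 h4
        exact ⟨h3, h4⟩
      rw [mulF, Finset.mem_biUnion]
      refine ⟨a.val, ?_, ?_⟩
      · rw [Finset.mem_filter, Nat.mem_properDivisors]
        exact ⟨⟨⟨b.val, hval.symm⟩, by nlinarith [val_pos b]⟩, by omega⟩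
      · rw [Finset.mem_product, mem_MF, mem_MF]
        have hdiv : n / a.val = b.val := by rw [← hval, Nat.mul_div_cancel_left _ (by omega)]
        exact ⟨⟨hav, rfl, hl.1.symm⟩, ⟨hbv, hdiv.symm, hl.2.symm⟩⟩

lemma TF_decomp (n : ℕ) (L : List (ℕ × ℕ)) :
    TF n L = ((if n = 1 ∧ L = [] then {Formula.one} else ∅)
      ∪ (addF n L).image (fun p => Formula.add p.1 p.2))
      ∪ (mulF L n).image (fun p => Formula.mul p.1 p.2) := by
  ext A
  cases A with
  | one =>
    simp only [mem_TF, Finset.mem_union, Finset.mem_image]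
    constructor
    · rintro ⟨-, hval, hpt⟩
      have h1 : n = 1 := by simpa [Formula.val] using hval.symm
      have h2 : L = [] := by simpa [Formula.primTraces] using hpt.symm
      left; left; simp [h1, h2]
    · rintro ((h | ⟨p, -, hp⟩) | ⟨p, -, hp⟩)
      · split at h
        · next hc =>
          simp only [Finset.mem_singleton] at h
          exact ⟨trivial, by simp [Formula.val, hc.1], by simp [Formula.primTraces, hc.2]⟩
        · simp at h
      · exact absurd hp (by simp)
      · exact absurd hp (by simp)
  | add a b =>
    simp only [mem_TF, Finset.mem_union, Finset.mem_image]
    constructor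
    · rintro ⟨⟨hav, hbv⟩, hval, hpt⟩
      left; right
      exact ⟨(a, b), mem_addF.2 ⟨hav, hbv, hval, hpt⟩, rfl⟩
    · rintro ((h | ⟨p, hp, hpe⟩) | ⟨p, -, hp⟩)
      · exfalso; split at h <;> simp at h
      · obtain ⟨x, y⟩ := p
        injection hpe with h1 h2
        subst h1; subst h2
        obtain ⟨hav, hbv, hval, hpt⟩ := mem_addF.1 hp
        exact ⟨⟨hav, hbv⟩, hval, hpt⟩
      · exact absurd hp (by simp)
  | mul a b =>
    simp only [mem_TF, Finset.mem_union, Finset.mem_image]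
    constructor
    · rintro ⟨⟨hav, hbv, ha2, hb2⟩, hval, hpt⟩
      right
      exact ⟨(a, b), mem_mulF.2 ⟨hav, hbv, ha2, hb2, hval, hpt.symm⟩, rfl⟩
    · rintro ((h | ⟨p, -, hp⟩) | ⟨p, hp, hpe⟩)
      · exfalso; split at h <;> simp at h
      · exact absurd hp (by simp)
      · obtain ⟨x, y⟩ := p
        injection hpe with h1 h2
        subst h1; subst h2
        obtain ⟨hav, hbv, ha2, hb2, hval, hpt⟩ := mem_mulF.1 hp
        exact ⟨⟨hav, hbv, ha2, hb2⟩, hval, hpt.symm⟩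

lemma card_addF (n : ℕ) (L : List (ℕ × ℕ)) :
    (addF n L).card = ∑ i ∈ Finset.range (L.length + 1), ∑ x ∈ Finset.HasAntidiagonal.antidiagonal n,
      fTrace x.1 (L.take i) * fTrace x.2 (L.drop i) := by
  rw [addF, Finset.card_biUnion]
  · rw [Finset.sum_product]
    exact Finset.sum_congr rfl fun i _ => Finset.sum_congr rfl fun x _ => by
      rw [Finset.card_product, fTrace_eq, fTrace_eq]
  · rintro ⟨i, x⟩ hq ⟨j, y⟩ hq' hne
    simp only [Finset.mem_coe, Finset.mem_product, Finset.mem_range, Finset.HasAntidiagonal.mem_antidiagonal] at hq hq'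
    rw [Function.onFun, Finset.disjoint_left]
    rintro ⟨a, b⟩ h1 h2
    simp only [Finset.mem_product, mem_TF] at h1 h2
    apply hne
    have hi : a.primTraces.length = i := by
      rw [h1.1.2.2, List.length_take]; omega
    have hj : a.primTraces.length = j := by
      rw [h2.1.2.2, List.length_take]; omega
    have hx1 : x.1 = a.val := h1.1.2.1.symm
    have hy1 : y.1 = a.val := h2.1.2.1.symm
    have : x = y := by
      obtain ⟨x1, x2⟩ := x; obtain ⟨y1, y2⟩ := y
      simp only [Prod.mk.injEq]
      simp only [Finset.HasAntidiagonal.mem_antidiagonal] at hq hq'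
      simp only at hx1 hy1
      constructor <;> omega
    simp [this, ← hi, ← hj]

lemma card_mulF (n : ℕ) (L : List (ℕ × ℕ)) : (mulF L n).card = mulTerm L n := by
  match L with
  | [] => simp [mulF, mulTerm]
  | (l, r) :: (y :: t) => simp [mulF, mulTerm]
  | [(l, r)] =>
    rw [mulF, mulTerm, dconv, Finset.card_biUnion]
    · refine Finset.sum_congr rfl fun d _ => ?_
      rw [Finset.card_product, fMul_eq, fMul_eq]
    · intro d hd d' hd' hne
      rw [Function.onFun, Finset.disjoint_left]
      rintro ⟨a, b⟩ h1 h2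
      simp only [Finset.mem_product, mem_MF] at h1 h2
      exact hne (h1.1.2.1 ▸ h2.1.2.1 ▸ rfl)

lemma fTrace_rec (n : ℕ) (L : List (ℕ × ℕ)) :
    fTrace n L = (if n = 1 ∧ L = [] then 1 else 0)
      + (∑ i ∈ Finset.range (L.length + 1), ∑ x ∈ Finset.HasAntidiagonal.antidiagonal n,
          fTrace x.1 (L.take i) * fTrace x.2 (L.drop i))
      + mulTerm L n := by
  have hinj_add : Function.Injective (fun p : Formula × Formula => Formula.add p.1 p.2) := by
    rintro ⟨a, b⟩ ⟨c, d⟩ h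
    simpa [Prod.ext_iff] using h
  have hinj_mul : Function.Injective (fun p : Formula × Formula => Formula.mul p.1 p.2) := by
    rintro ⟨a, b⟩ ⟨c, d⟩ h
    simpa [Prod.ext_iff] using h
  have hd1 : Disjoint ((if n = 1 ∧ L = [] then ({Formula.one} : Finset Formula) else ∅))
      ((addF n L).image (fun p => Formula.add p.1 p.2)) := by
    rw [Finset.disjoint_left]
    intro A h1 h2
    simp only [Finset.mem_image] at h2
    obtain ⟨p, -, hp⟩ := h2
    split at h1
    · rw [Finset.mem_singleton] at h1
      subst h1
      exact Formula.noConfusion hp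
    · exact absurd h1 (Finset.notMem_empty A)
  have hd2 : Disjoint (((if n = 1 ∧ L = [] then ({Formula.one} : Finset Formula) else ∅))
        ∪ (addF n L).image (fun p => Formula.add p.1 p.2))
      ((mulF L n).image (fun p => Formula.mul p.1 p.2)) := by
    rw [Finset.disjoint_left]
    intro A h1 h2
    simp only [Finset.mem_image] at h2
    obtain ⟨p, -, hp⟩ := h2
    rw [Finset.mem_union] at h1
    rcases h1 with h1 | h1
    · split at h1
      · rw [Finset.mem_singleton] at h1
        subst h1
        exact Formula.noConfusion hp
      · exact absurd h1 (Finset.notMem_empty A)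
    · simp only [Finset.mem_image] at h1
      obtain ⟨q, -, hq⟩ := h1
      rw [← hq] at hp
      exact Formula.noConfusion hp
  rw [fTrace_eq, TF_decomp, Finset.card_union_of_disjoint hd2,
    Finset.card_union_of_disjoint hd1, Finset.card_image_of_injective _ hinj_add,
    Finset.card_image_of_injective _ hinj_mul, card_addF, card_mulF]
  have hcard : (if n = 1 ∧ L = [] then ({Formula.one} : Finset Formula) else ∅).card
      = if n = 1 ∧ L = [] then 1 else 0 := by split <;> simp
  rw [hcard]

lemma fMul0_rec (n : ℕ) (hn : 2 ≤ n) :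
    fMul 0 n = ∑ x ∈ Finset.HasAntidiagonal.antidiagonal n, fMul 0 x.1 * fMul 0 x.2 := by
  have := fTrace_rec n []
  simp only [List.length_nil, zero_add, Finset.range_one, Finset.sum_singleton,
    List.take_nil, List.drop_nil, fTrace_nil, mulTerm] at this
  rw [if_neg (by omega)] at this
  simpa using this

end Stmt18

namespace Stmt18

open Finset

/-- additive convolution -/
def aconv (g h : ℕ → ℕ) (n : ℕ) : ℕ := ∑ x ∈ Finset.HasAntidiagonal.antidiagonal n, g x.1 * h x.2

/-- iterated additive convolution -/
def mconv : List (ℕ → ℕ) → ℕ → ℕ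
  | [], n => if n = 0 then 1 else 0
  | g :: G, n => aconv g (mconv G) n

noncomputable def Af (p : ℕ) : ℕ → ℕ := fun m => m.choose p * fMul 0 m

noncomputable def Gf (L : List (ℕ × ℕ)) : List (ℕ → ℕ) :=
  L.map fun x => dconv (fMul x.1) (fMul x.2)

noncomputable def Sf (n : ℕ) (L : List (ℕ × ℕ)) : ℕ :=
  aconv (Af L.length) (mconv (Gf L)) (n + L.length)

lemma aconv_eq (f g : ℕ → ℕ) (n : ℕ) :
    aconv f g n = PowerSeries.coeff n (PowerSeries.mk f * PowerSeries.mk g) := by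
  rw [PowerSeries.coeff_mul, aconv]
  exact Finset.sum_congr rfl fun x _ => by rw [PowerSeries.coeff_mk, PowerSeries.coeff_mk]

lemma mk_aconv (f g : ℕ → ℕ) :
    PowerSeries.mk (aconv f g) = PowerSeries.mk f * PowerSeries.mk g := by
  apply PowerSeries.ext
  intro n
  rw [PowerSeries.coeff_mk, aconv_eq]

lemma aconv_comm (f g : ℕ → ℕ) (n : ℕ) : aconv f g n = aconv g f n := by
  rw [aconv_eq, aconv_eq, mul_comm]

lemma aconv_assoc (f g h : ℕ → ℕ) (n : ℕ) :
    aconv (aconv f g) h n = aconv f (aconv g h) n := by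
  rw [aconv_eq, aconv_eq, mk_aconv, mk_aconv, mul_assoc]

lemma aconv_sum {ι : Type*} (s : Finset ι) (F : ι → ℕ → ℕ) (h : ℕ → ℕ) (n : ℕ) :
    aconv (fun m => ∑ i ∈ s, F i m) h n = ∑ i ∈ s, aconv (F i) h n := by
  simp only [aconv, Finset.sum_mul]
  rw [Finset.sum_comm]

lemma aconv_addf (f₁ f₂ h : ℕ → ℕ) (n : ℕ) :
    aconv (fun m => f₁ m + f₂ m) h n = aconv f₁ h n + aconv f₂ h n := by
  simp only [aconv, add_mul, Finset.sum_add_distrib]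

lemma mk_delta : PowerSeries.mk (fun m : ℕ => if m = 0 then 1 else 0) = (1 : PowerSeries ℕ) := by
  apply PowerSeries.ext
  intro n
  rw [PowerSeries.coeff_mk, PowerSeries.coeff_one]

lemma aconv_delta_left (h : ℕ → ℕ) (n : ℕ) :
    aconv (fun m => if m = 0 then 1 else 0) h n = h n := by
  rw [aconv_eq, mk_delta, one_mul, PowerSeries.coeff_mk]

lemma mconv_nil (n : ℕ) : mconv [] n = if n = 0 then 1 else 0 := rfl

lemma mconv_cons (g : ℕ → ℕ) (G : List (ℕ → ℕ)) (n : ℕ) :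
    mconv (g :: G) n = aconv g (mconv G) n := rfl

lemma mk_mconv (G : List (ℕ → ℕ)) :
    PowerSeries.mk (mconv G) = (G.map PowerSeries.mk).prod := by
  induction G with
  | nil => rw [List.map_nil, List.prod_nil]; exact mk_delta
  | cons g G ih =>
    have h0 : mconv (g :: G) = aconv g (mconv G) := rfl
    rw [h0, mk_aconv, ih, List.map_cons, List.prod_cons]

lemma mconv_singleton (g : ℕ → ℕ) (n : ℕ) : mconv [g] n = g n := by
  have h1 : mconv [g] = aconv g (mconv []) := rfl
  have h2 : mconv [] = fun m : ℕ => if m = 0 then 1 else 0 := rfl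
  rw [h1, aconv_comm, h2, aconv_delta_left]

lemma mconv_append (G₁ G₂ : List (ℕ → ℕ)) (n : ℕ) :
    mconv (G₁ ++ G₂) n = aconv (mconv G₁) (mconv G₂) n := by
  have h1 : mconv (G₁ ++ G₂) n = PowerSeries.coeff n (PowerSeries.mk (mconv (G₁ ++ G₂))) :=
    (PowerSeries.coeff_mk _ _).symm
  rw [h1, mk_mconv, List.map_append, List.prod_append, ← mk_mconv, ← mk_mconv, ← mk_aconv,
    PowerSeries.coeff_mk]

lemma mconv_zero_of_lt (G : List (ℕ → ℕ)) (hG : ∀ g ∈ G, g 0 = 0) :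
    ∀ t, t < G.length → mconv G t = 0 := by
  induction G with
  | nil => intro t ht; simp at ht
  | cons g G ih =>
    intro t ht
    rw [mconv_cons, aconv]
    apply Finset.sum_eq_zero
    rintro ⟨a, b⟩ hab
    simp only [Finset.HasAntidiagonal.mem_antidiagonal] at hab
    rcases Nat.eq_zero_or_pos a with ha | ha
    · subst ha
      rw [hG g (List.mem_cons_self (a := g) (l := G))]
      ring
    · have hb : b < G.length := by
        simp only [List.length_cons] at ht; omega
      rw [ih (fun g' hg' => hG g' (List.mem_cons_of_mem _ hg')) b hb]
      ring

lemma dconv_zero (g h : ℕ → ℕ) : dconv g h 0 = 0 := by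
  simp [dconv]

lemma Gf_apply_zero {L : List (ℕ × ℕ)} : ∀ g ∈ Gf L, g 0 = 0 := by
  intro g hg
  simp only [Gf, List.mem_map] at hg
  obtain ⟨x, -, rfl⟩ := hg
  exact dconv_zero _ _

lemma Af_zero (p : ℕ) : Af p 0 = 0 := by
  simp [Af, fMul_zero_right]

lemma Af_of_lt {p m : ℕ} (h : m < p) : Af p m = 0 := by
  simp [Af, Nat.choose_eq_zero_of_lt h]

lemma aconv_Af_of_lt (p : ℕ) (h : ℕ → ℕ) {s : ℕ} (hs : s < p) : aconv (Af p) h s = 0 := by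
  rw [aconv]
  apply Finset.sum_eq_zero
  rintro ⟨a, b⟩ hab
  simp only [Finset.HasAntidiagonal.mem_antidiagonal] at hab
  rw [Af_of_lt (by omega)]
  ring

lemma aconv_shift (f g : ℕ → ℕ) (i j n : ℕ) (hf : ∀ s < i, f s = 0) (hg : ∀ t < j, g t = 0) :
    aconv f g (n + i + j) = ∑ x ∈ Finset.HasAntidiagonal.antidiagonal n, f (x.1 + i) * g (x.2 + j) := by
  rw [aconv, Finset.Nat.sum_antidiagonal_eq_sum_range_succ_mk,
    Finset.Nat.sum_antidiagonal_eq_sum_range_succ_mk]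
  have h1 : ∑ k ∈ Finset.range (n + i + j + 1), f k * g (n + i + j - k)
      = ∑ k ∈ Finset.Ico i (n + i + 1), f k * g (n + i + j - k) := by
    rw [Finset.range_eq_Ico]
    apply (Finset.sum_subset ?_ ?_).symm
    · intro k hk; simp only [Finset.mem_Ico] at hk ⊢; omega
    · intro k hk1 hk2
      simp only [Finset.mem_Ico] at hk1 hk2
      rcases Nat.lt_or_ge k i with h | h
      · rw [hf k h]; ring
      · have : n + i + j - k < j := by omega
        rw [hg _ this]; ring
  rw [h1, Finset.sum_Ico_eq_sum_range]
  have h2 : n + i + 1 - i = n + 1 := by omega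
  rw [h2]
  apply Finset.sum_congr rfl
  intro k hk
  simp only [Finset.mem_range] at hk
  congr 1
  · congr 1; omega
  · congr 1; omega

lemma Af_rec (p M : ℕ) :
    Af p M = (∑ i ∈ Finset.range (p + 1), aconv (Af i) (Af (p - i)) M)
      + (if M = 1 ∧ p ≤ 1 then 1 else 0) := by
  rcases M with _ | _ | M
  · -- M = 0
    rw [Af_zero]
    have : ∀ i ∈ Finset.range (p + 1), aconv (Af i) (Af (p - i)) 0 = 0 := by
      intro i _
      rw [aconv]
      apply Finset.sum_eq_zero
      rintro ⟨a, b⟩ hab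
      simp only [Finset.HasAntidiagonal.mem_antidiagonal] at hab
      have ha : a = 0 := by omega
      subst ha
      rw [Af_zero]; ring
    rw [Finset.sum_congr rfl this]
    simp
  · -- M = 1
    have hz : ∀ i ∈ Finset.range (p + 1), aconv (Af i) (Af (p - i)) 1 = 0 := by
      intro i _
      rw [aconv]
      apply Finset.sum_eq_zero
      rintro ⟨a, b⟩ hab
      simp only [Finset.HasAntidiagonal.mem_antidiagonal] at hab
      rcases Nat.eq_zero_or_pos a with ha | ha
      · subst ha; rw [Af_zero]; ring
      · have hb : b = 0 := by omega
        subst hb; rw [Af_zero]; ring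
    rw [Finset.sum_congr rfl hz]
    simp only [Finset.sum_const_zero, zero_add]
    rcases Nat.lt_or_ge p 2 with hp | hp
    · interval_cases p
      · simp [Af, fMul_zero_one]
      · simp [Af, fMul_zero_one]
    · rw [if_neg (by omega), Af, Nat.choose_eq_zero_of_lt (by omega)]
      ring
  · -- M ≥ 2
    rw [if_neg (by omega)]
    have hM2 : 2 ≤ M + 2 := by omega
    have hcat := fMul0_rec (M + 2) hM2
    have hAf : Af p (M + 2) = (M + 2).choose p * fMul 0 (M + 2) := rfl
    rw [hAf, hcat, Finset.mul_sum]
    rw [add_zero]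
    have step1 : ∑ x ∈ Finset.HasAntidiagonal.antidiagonal (M + 2), (M + 2).choose p * (fMul 0 x.1 * fMul 0 x.2)
        = ∑ x ∈ Finset.HasAntidiagonal.antidiagonal (M + 2), ∑ ij ∈ Finset.HasAntidiagonal.antidiagonal p,
            (x.1.choose ij.1 * x.2.choose ij.2) * (fMul 0 x.1 * fMul 0 x.2) := by
      apply Finset.sum_congr rfl
      rintro ⟨a, b⟩ hab
      simp only [Finset.HasAntidiagonal.mem_antidiagonal] at hab
      rw [← Finset.sum_mul, ← Nat.add_choose_eq]
      rw [show a + b = M + 2 from hab]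
    rw [step1, Finset.sum_comm]
    rw [Finset.Nat.sum_antidiagonal_eq_sum_range_succ_mk]
    apply Finset.sum_congr rfl
    intro i _
    rw [aconv]
    apply Finset.sum_congr rfl
    rintro ⟨a, b⟩ hab
    simp only [Af]
    ring

end Stmt18

namespace Stmt18

open Finset

lemma aconv_deltaOne (h : ℕ → ℕ) (N : ℕ) :
    aconv (fun m => if m = 1 then 1 else 0) h N = if N = 0 then 0 else h (N - 1) := by
  rcases N with _ | N
  · simp [aconv]
  · rw [if_neg (Nat.succ_ne_zero N), aconv, Finset.sum_eq_single (1, N)]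
    · simp
    · rintro ⟨a, b⟩ hab hne
      simp only [Finset.HasAntidiagonal.mem_antidiagonal] at hab
      rcases eq_or_ne a 1 with rfl | ha
      · have hb : b = N := by omega
        subst hb
        exact absurd rfl hne
      · simp [ha]
    · intro hmem
      exact absurd (by rw [Finset.HasAntidiagonal.mem_antidiagonal]; omega
          : ((1 : ℕ), N) ∈ Finset.HasAntidiagonal.antidiagonal (N + 1)) hmem

lemma aconv_mul_mul (a b c d : ℕ → ℕ) (N : ℕ) :
    aconv (aconv a b) (aconv c d) N = aconv (aconv a c) (aconv b d) N := by
  rw [aconv_eq, aconv_eq, mk_aconv, mk_aconv, mk_aconv, mk_aconv, mul_mul_mul_comm]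

lemma Gf_length (L : List (ℕ × ℕ)) : (Gf L).length = L.length := List.length_map _

lemma delta_part (L : List (ℕ × ℕ)) (n : ℕ) :
    aconv (fun M => if M = 1 ∧ L.length ≤ 1 then 1 else 0) (mconv (Gf L)) (n + L.length)
      = (if n = 1 ∧ L = [] then 1 else 0) + mulTerm L n := by
  match L with
  | [] =>
    have he : (fun M : ℕ => if M = 1 ∧ ([] : List (ℕ × ℕ)).length ≤ 1 then 1 else 0)
        = fun M : ℕ => if M = 1 then 1 else 0 := by
      funext M; simp
    rw [he, aconv_deltaOne]
    have : mulTerm [] n = 0 := rfl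
    rw [this, add_zero]
    have hGf : Gf ([] : List (ℕ × ℕ)) = [] := rfl
    rw [hGf]
    have hm : mconv ([] : List (ℕ → ℕ)) (n + ([] : List (ℕ × ℕ)).length - 1)
        = if n + ([] : List (ℕ × ℕ)).length - 1 = 0 then 1 else 0 := rfl
    rw [hm]
    simp only [List.length_nil, add_zero, and_true]
    split_ifs <;> omega
  | [(l, r)] =>
    have he : (fun M : ℕ => if M = 1 ∧ ([(l, r)] : List (ℕ × ℕ)).length ≤ 1 then 1 else 0)
        = fun M : ℕ => if M = 1 then 1 else 0 := by
      funext M; simp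
    rw [he, aconv_deltaOne, if_neg (by simp)]
    have hGf : Gf [(l, r)] = [dconv (fMul l) (fMul r)] := rfl
    rw [hGf]
    have hlen : n + ([(l, r)] : List (ℕ × ℕ)).length - 1 = n := by simp
    rw [hlen, mconv_singleton]
    have h1 : mulTerm [(l, r)] n = dconv (fMul l) (fMul r) n := rfl
    rw [h1, if_neg (by simp)]
    exact (zero_add _).symm
  | x :: y :: t =>
    have he : (fun M : ℕ => if M = 1 ∧ (x :: y :: t).length ≤ 1 then 1 else 0)
        = fun M : ℕ => (0 : ℕ) := by
      funext M
      rw [if_neg (by simp)]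
    rw [he]
    have hz : aconv (fun _ : ℕ => (0 : ℕ)) (mconv (Gf (x :: y :: t))) (n + (x :: y :: t).length)
        = 0 := by
      rw [aconv]
      exact Finset.sum_eq_zero fun z _ => zero_mul _
    rw [hz, if_neg (by simp)]
    have : mulTerm (x :: y :: t) n = 0 := rfl
    rw [this]

lemma Sf_rec (n : ℕ) (L : List (ℕ × ℕ)) :
    Sf n L = (if n = 1 ∧ L = [] then 1 else 0)
      + (∑ i ∈ Finset.range (L.length + 1), ∑ x ∈ Finset.HasAntidiagonal.antidiagonal n,
          Sf x.1 (L.take i) * Sf x.2 (L.drop i))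
      + mulTerm L n := by
  have hSf : Sf n L = aconv (Af L.length) (mconv (Gf L)) (n + L.length) := rfl
  rw [hSf]
  have hAf : Af L.length = fun M =>
      (∑ i ∈ Finset.range (L.length + 1), aconv (Af i) (Af (L.length - i)) M)
        + (if M = 1 ∧ L.length ≤ 1 then 1 else 0) :=
    funext fun M => Af_rec L.length M
  rw [hAf, aconv_addf, aconv_sum, delta_part]
  rw [← add_assoc]
  congr 1
  rw [add_comm (if n = 1 ∧ L = [] then 1 else 0)]
  congr 1
  apply Finset.sum_congr rfl
  intro i hi
  simp only [Finset.mem_range] at hi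
  have hip : i ≤ L.length := by omega
  -- split the list
  have hGf : Gf L = Gf (L.take i) ++ Gf (L.drop i) := by
    rw [Gf, Gf, Gf, ← List.map_append, List.take_append_drop]
  rw [hGf]
  have hmc : mconv (Gf (L.take i) ++ Gf (L.drop i))
      = aconv (mconv (Gf (L.take i))) (mconv (Gf (L.drop i))) :=
    funext fun m => mconv_append _ _ m
  rw [hmc, aconv_mul_mul]
  have hlen1 : (L.take i).length = i := by rw [List.length_take]; omega
  have hlen2 : (L.drop i).length = L.length - i := by rw [List.length_drop]
  have hN : n + L.length = n + i + (L.length - i) := by omega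
  rw [hN, aconv_shift _ _ _ _ _ (fun s hs => aconv_Af_of_lt _ _ hs)
    (fun t ht => aconv_Af_of_lt _ _ ht)]
  apply Finset.sum_congr rfl
  intro x _
  have h1 : Sf x.1 (L.take i)
      = aconv (Af (L.take i).length) (mconv (Gf (L.take i))) (x.1 + (L.take i).length) := rfl
  have h2 : Sf x.2 (L.drop i)
      = aconv (Af (L.drop i).length) (mconv (Gf (L.drop i))) (x.2 + (L.drop i).length) := rfl
  rw [h1, h2, hlen1, hlen2]

lemma Sf_zero (L : List (ℕ × ℕ)) : Sf 0 L = 0 := by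
  have hSf : Sf 0 L = aconv (Af L.length) (mconv (Gf L)) (0 + L.length) := rfl
  rw [hSf, zero_add, aconv]
  apply Finset.sum_eq_zero
  rintro ⟨a, b⟩ hab
  simp only [Finset.HasAntidiagonal.mem_antidiagonal] at hab
  rcases Nat.lt_or_ge b L.length with hb | hb
  · rw [mconv_zero_of_lt (Gf L) Gf_apply_zero b (by rw [Gf_length]; omega)]
    ring
  · have ha : a = 0 := by omega
    subst ha
    rw [Af_zero]
    ring

lemma master : ∀ n L, fTrace n L = Sf n L := by
  intro n
  induction n using Nat.strong_induction_on with
  | _ n ih =>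
    intro L
    rcases Nat.eq_zero_or_pos n with rfl | hn
    · rw [fTrace_zero, Sf_zero]
    · rw [fTrace_rec, Sf_rec]
      congr 1
      congr 1
      apply Finset.sum_congr rfl
      intro i _
      apply Finset.sum_congr rfl
      intro x hx
      simp only [Finset.HasAntidiagonal.mem_antidiagonal] at hx
      rcases Nat.eq_zero_or_pos x.1 with h1 | h1
      · rw [h1, fTrace_zero, Sf_zero, zero_mul, zero_mul]
      rcases Nat.eq_zero_or_pos x.2 with h2 | h2
      · rw [h2, fTrace_zero, Sf_zero, mul_zero, mul_zero]
      · rw [ih x.1 (by omega) _, ih x.2 (by omega) _]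

end Stmt18

namespace Stmt18

open Finset

lemma sum_adt_succ {M : Type*} [AddCommMonoid M] (k N : ℕ) (F : (Fin (k + 1) → ℕ) → M) :
    ∑ v ∈ Finset.Nat.antidiagonalTuple (k + 1) N, F v
      = ∑ x ∈ Finset.HasAntidiagonal.antidiagonal N, ∑ w ∈ Finset.Nat.antidiagonalTuple k x.2,
          F (Fin.cons x.1 w) := by
  rw [Finset.sum_sigma']
  refine Finset.sum_nbij' (fun v => ⟨(v 0, ∑ j : Fin k, v j.succ), Fin.tail v⟩)
    (fun z => Fin.cons z.1.1 z.2) ?_ ?_ ?_ ?_ ?_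
  · intro v hv
    rw [Finset.Nat.mem_antidiagonalTuple] at hv
    rw [Finset.mem_sigma, Finset.HasAntidiagonal.mem_antidiagonal, Finset.Nat.mem_antidiagonalTuple]
    rw [Fin.sum_univ_succ] at hv
    exact ⟨hv, rfl⟩
  · rintro ⟨⟨x1, x2⟩, w⟩ hz
    rw [Finset.mem_sigma, Finset.HasAntidiagonal.mem_antidiagonal, Finset.Nat.mem_antidiagonalTuple] at hz
    dsimp only at hz ⊢
    rw [Finset.Nat.mem_antidiagonalTuple, Fin.sum_univ_succ, Fin.cons_zero]
    simp only [Fin.cons_succ]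
    rw [hz.2]
    exact hz.1
  · intro v _
    exact Fin.cons_self_tail v
  · rintro ⟨⟨x1, x2⟩, w⟩ hz
    rw [Finset.mem_sigma, Finset.HasAntidiagonal.mem_antidiagonal, Finset.Nat.mem_antidiagonalTuple] at hz
    dsimp only at hz ⊢
    simp only [Fin.cons_zero, Fin.cons_succ, Fin.tail_cons]
    rw [hz.2]
  · intro v _
    rw [Fin.cons_self_tail]

lemma adt_mconv (k : ℕ) (gs : Fin k → ℕ → ℕ) (h : ℕ → ℕ) (N : ℕ) :
    ∑ v ∈ Finset.Nat.antidiagonalTuple (k + 1) N,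
        h (v (Fin.last k)) * ∏ i : Fin k, gs i (v i.castSucc)
      = aconv h (mconv (List.ofFn gs)) N := by
  induction k generalizing N with
  | zero =>
    rw [Finset.Nat.antidiagonalTuple_one, Finset.sum_singleton]
    have h1 : (![N] : Fin 1 → ℕ) (Fin.last 0) = N := rfl
    rw [h1]
    have h2 : (∏ i : Fin 0, gs i ((![N] : Fin 1 → ℕ) i.castSucc)) = 1 := Finset.prod_empty
    rw [h2, mul_one, List.ofFn_zero]
    have h3 : mconv [] = fun m : ℕ => if m = 0 then 1 else 0 := rfl
    rw [aconv_comm, h3, aconv_delta_left]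
  | succ k ih =>
    rw [sum_adt_succ]
    have hstep : ∀ x ∈ Finset.HasAntidiagonal.antidiagonal N,
        (∑ w ∈ Finset.Nat.antidiagonalTuple (k + 1) x.2,
          h ((Fin.cons x.1 w : Fin (k + 2) → ℕ) (Fin.last (k + 1)))
            * ∏ i : Fin (k + 1), gs i ((Fin.cons x.1 w : Fin (k + 2) → ℕ) i.castSucc))
        = gs 0 x.1 * aconv h (mconv (List.ofFn (fun j : Fin k => gs j.succ))) x.2 := by
      intro x _
      rw [← ih (fun j => gs j.succ) x.2, Finset.mul_sum]
      apply Finset.sum_congr rfl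
      intro w _
      have hlast : (Fin.cons x.1 w : Fin (k + 2) → ℕ) (Fin.last (k + 1)) = w (Fin.last k) := by
        rw [← Fin.succ_last, Fin.cons_succ]
      rw [hlast, Fin.prod_univ_succ]
      have hzero : (Fin.cons x.1 w : Fin (k + 2) → ℕ) (Fin.castSucc 0) = x.1 := by
        rw [Fin.castSucc_zero, Fin.cons_zero]
      rw [hzero]
      have hsucc : ∀ j : Fin k,
          (Fin.cons x.1 w : Fin (k + 2) → ℕ) (Fin.castSucc j.succ) = w j.castSucc := by
        intro j
        rw [← Fin.succ_castSucc, Fin.cons_succ]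
      rw [Finset.prod_congr rfl fun j _ => by rw [hsucc j]]
      ring
    rw [Finset.sum_congr rfl hstep]
    have hofn : List.ofFn gs = gs 0 :: List.ofFn (fun j : Fin k => gs j.succ) := List.ofFn_succ (f := gs)
    rw [hofn]
    have hmc : mconv (gs 0 :: List.ofFn (fun j : Fin k => gs j.succ))
        = aconv (gs 0) (mconv (List.ofFn (fun j : Fin k => gs j.succ))) := rfl
    rw [hmc]
    have hswap : aconv h (aconv (gs 0) (mconv (List.ofFn (fun j : Fin k => gs j.succ)))) N
        = aconv (gs 0) (aconv h (mconv (List.ofFn (fun j : Fin k => gs j.succ)))) N := by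
      rw [aconv_eq, aconv_eq, mk_aconv, mk_aconv, mul_left_comm]
    rw [hswap]
    rfl

lemma RHS_eq (n : ℕ) (L : List (ℕ × ℕ)) :
    (∑ v ∈ (Finset.Nat.antidiagonalTuple (L.length + 1) (n + L.length)).filter
        (fun v => ∀ i, 0 < v i),
      (v (Fin.last L.length)).choose L.length * fMul 0 (v (Fin.last L.length)) *
        ∏ i : Fin L.length,
          dconv (fMul (L.get i).1) (fMul (L.get i).2) (v i.castSucc))
      = Sf n L := by
  rw [Finset.sum_filter_of_ne]
  · have hterm : ∀ v ∈ Finset.Nat.antidiagonalTuple (L.length + 1) (n + L.length),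
        (v (Fin.last L.length)).choose L.length * fMul 0 (v (Fin.last L.length)) *
          ∏ i : Fin L.length, dconv (fMul (L.get i).1) (fMul (L.get i).2) (v i.castSucc)
        = Af L.length (v (Fin.last L.length)) *
          ∏ i : Fin L.length,
            (fun i : Fin L.length => dconv (fMul (L.get i).1) (fMul (L.get i).2)) i
              (v i.castSucc) := by
      intro v _
      rfl
    rw [Finset.sum_congr rfl hterm,
      adt_mconv L.length (fun i : Fin L.length => dconv (fMul (L.get i).1) (fMul (L.get i).2))
        (Af L.length) (n + L.length)]
    have hofn : List.ofFn (fun i : Fin L.length => dconv (fMul (L.get i).1) (fMul (L.get i).2))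
        = Gf L := by
      have hfun : (fun i : Fin L.length => dconv (fMul (L.get i).1) (fMul (L.get i).2))
          = ((fun x : ℕ × ℕ => dconv (fMul x.1) (fMul x.2)) ∘ L.get) := rfl
      rw [hfun, ← List.map_ofFn, List.ofFn_get, Gf]
    rw [hofn]
    rfl
  · intro v hv hne i
    by_contra h0
    have h0' : v i = 0 := by omega
    apply hne
    cases i using Fin.lastCases with
    | last =>
      rw [h0', fMul_zero_right, mul_zero, zero_mul]
    | cast j =>
      rw [Finset.prod_eq_zero (Finset.mem_univ j) (by rw [h0', dconv_zero]), mul_zero]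

end Stmt18


/-- For every `k ≥ 1` and every `k`-trace `(p, ℓ, r)` (encoded as the list
`L = [(ℓ₁,r₁),…,(ℓ_p,r_p)]` with `∑(ℓᵢ + rᵢ + 1) = k`),
`f_{(p,ℓ,r)}(n) = ∑_{n₁+⋯+n_p+m = n+p} binom(m,p) f₀(m) ∏ᵢ (f_{ℓᵢ} *' f_{rᵢ})(nᵢ)`,
the sum being over positive integers `n₁, …, n_p, m`. -/
theorem stmt18 (k : ℕ) (hk : 1 ≤ k) (L : List (ℕ × ℕ))
    (hL : (L.map fun x => x.1 + x.2 + 1).sum = k) (n : ℕ) (hn : 1 ≤ n) :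
    fTrace n L =
      ∑ v ∈ (Finset.Nat.antidiagonalTuple (L.length + 1) (n + L.length)).filter
          (fun v => ∀ i, 0 < v i),
        (v (Fin.last L.length)).choose L.length * fMul 0 (v (Fin.last L.length)) *
          ∏ i : Fin L.length,
            dconv (fMul (L.get i).1) (fMul (L.get i).2) (v i.castSucc) := by
  rw [Stmt18.master n L]
  exact (Stmt18.RHS_eq n L).symm
end
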